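/- arXiv:1703.03588 — 4 statements merged into one kernel-verified Lean document; each statement's English description precedes it below -/
import Mathlib

section
/- Let f \in S^*[A,B] with -1 \le B \le 1 < A, let t be a positive integer, and write (z/f(z))^t = 1 + \sum_{j=1}^{\infty} a_j^{(-t)} z^j for z \in \mathbb{D} (this is well defined since f(z)/z extends analytically to \mathbb{D} with value 1 at 0 and is non-vanishing). Then for every integer s \ge 1, s^2 |a_s^{(-t)}|^2 \le (A-B)^2 t^2 + \sum_{j=1}^{s-1} \big(((A-B)t + Bj)^2 - j^2\big) |a_j^{(-t)}|^2. -/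
set_option maxHeartbeats 1000000


open Complex Metric Finset

noncomputable section

/-- The class `P[A,B]` of analytic functions `p` on the unit disc with `p 0 = 1`
subordinate to `(1 + A z)/(1 + B z)`. -/
def MemP (A B : ℝ) (p : ℂ → ℂ) : Prop :=
  AnalyticOnNhd ℂ p (ball (0 : ℂ) 1) ∧ p 0 = 1 ∧
    ∃ w : ℂ → ℂ, AnalyticOnNhd ℂ w (ball (0 : ℂ) 1) ∧ w 0 = 0 ∧
      (∀ z ∈ ball (0 : ℂ) 1, ‖w z‖ < 1) ∧
      (∀ z ∈ ball (0 : ℂ) 1, p z = (1 + (A : ℂ) * w z) / (1 + (B : ℂ) * w z))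

/-- The class `S*[A,B]` of generalized Janowski starlike functions: normalized analytic
functions `f` on the unit disc, non-vanishing off the origin, with `z f'(z)/f(z) ∈ P[A,B]`. -/
def MemSstar (A B : ℝ) (f : ℂ → ℂ) : Prop :=
  AnalyticOnNhd ℂ f (ball (0 : ℂ) 1) ∧ f 0 = 0 ∧ deriv f 0 = 1 ∧
    (∀ z ∈ ball (0 : ℂ) 1, z ≠ 0 → f z ≠ 0) ∧
    ∃ p : ℂ → ℂ, MemP A B p ∧ ∀ z ∈ ball (0 : ℂ) 1, z ≠ 0 → p z = z * deriv f z / f z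

def mkSeries (b : ℕ → ℂ) : FormalMultilinearSeries ℂ ℂ ℂ :=
  fun n => ContinuousMultilinearMap.mkPiRing ℂ (Fin n) (b n)

lemma mkSeries_coeff (b : ℕ → ℂ) (n : ℕ) : (mkSeries b).coeff n = b n := by
  simp [mkSeries, FormalMultilinearSeries.coeff, ContinuousMultilinearMap.mkPiRing_apply]

lemma mkSeries_norm (b : ℕ → ℂ) (n : ℕ) : ‖mkSeries b n‖ = ‖b n‖ :=
  ContinuousMultilinearMap.norm_mkPiRing _

lemma mkSeries_apply (b : ℕ → ℂ) (n : ℕ) (z : ℂ) :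
    (mkSeries b n fun _ => z) = b n * z ^ n := by
  rw [FormalMultilinearSeries.apply_eq_pow_smul_coeff, mkSeries_coeff, smul_eq_mul, mul_comm]

lemma hasFPS (b : ℕ → ℂ) (g : ℂ → ℂ)
    (h : ∀ z ∈ ball (0 : ℂ) 1, HasSum (fun j : ℕ => b j * z ^ j) (g z)) :
    HasFPowerSeriesOnBall g (mkSeries b) 0 1 := by
  constructor
  · apply ENNReal.le_of_forall_nnreal_lt
    intro r hr
    have hr1 : (r : ℝ) < 1 := by exact_mod_cast hr
    have hrb : ((r : ℝ) : ℂ) ∈ ball (0 : ℂ) 1 := by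
      simp only [mem_ball, dist_zero_right, Complex.norm_real, Real.norm_eq_abs]
      rw [_root_.abs_of_nonneg r.coe_nonneg]; exact hr1
    have hsum := (h _ hrb).summable
    apply FormalMultilinearSeries.le_radius_of_summable
    have : Summable fun n => ‖b n * ((r : ℝ) : ℂ) ^ n‖ := summable_norm_iff.mpr hsum
    refine this.congr fun n => ?_
    rw [norm_mul, norm_pow, mkSeries_norm, Complex.norm_real, Real.norm_eq_abs,
      _root_.abs_of_nonneg r.coe_nonneg]
  · exact one_pos
  · intro y hy
    have hy' : y ∈ ball (0 : ℂ) 1 := by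
      have h : ‖y‖ₑ < 1 := by simpa using hy
      rw [enorm_eq_nnnorm, ENNReal.coe_lt_one_iff] at h
      have h2 : ‖y‖ < 1 := by exact_mod_cast h
      simpa [mem_ball, dist_zero_right] using h2
    have := h y hy'
    rw [zero_add]
    simpa only [mkSeries_apply] using this

/-- Norm-summability of the coefficients at each radius `< 1`. -/
lemma summable_coeff (b : ℕ → ℂ) (g : ℂ → ℂ)
    (h : ∀ z ∈ ball (0 : ℂ) 1, HasSum (fun j : ℕ => b j * z ^ j) (g z))
    {r : ℝ} (hr0 : 0 ≤ r) (hr1 : r < 1) : Summable fun j => ‖b j‖ * r ^ j := by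
  have hrb : ((r : ℝ) : ℂ) ∈ ball (0 : ℂ) 1 := by
    simp only [mem_ball, dist_zero_right, Complex.norm_real, Real.norm_eq_abs]
    rw [_root_.abs_of_nonneg hr0]; exact hr1
  have := summable_norm_iff.mpr (h _ hrb).summable
  refine this.congr fun n => ?_
  rw [norm_mul, norm_pow, Complex.norm_real, Real.norm_eq_abs, _root_.abs_of_nonneg hr0]

/-- Uniqueness of coefficients. -/
lemma coeff_unique {b b' : ℕ → ℂ} {g : ℂ → ℂ}
    (h : ∀ z ∈ ball (0 : ℂ) 1, HasSum (fun j : ℕ => b j * z ^ j) (g z))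
    (h' : ∀ z ∈ ball (0 : ℂ) 1, HasSum (fun j : ℕ => b' j * z ^ j) (g z)) :
    b = b' := by
  have := (hasFPS b g h).hasFPowerSeriesAt.eq_formalMultilinearSeries
    (hasFPS b' g h').hasFPowerSeriesAt
  funext n
  rw [← mkSeries_coeff b n, ← mkSeries_coeff b' n, this]

/-- Every function differentiable on the unit ball has a power series representation there. -/
lemma exists_rep (g : ℂ → ℂ) (hg : DifferentiableOn ℂ g (ball (0 : ℂ) 1)) :
    ∃ b : ℕ → ℂ, ∀ z ∈ ball (0 : ℂ) 1, HasSum (fun j : ℕ => b j * z ^ j) (g z) := by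
  have key : ∀ r : NNReal, 0 < r → (r : ℝ) < 1 →
      HasFPowerSeriesOnBall g (cauchyPowerSeries g 0 r) 0 r := by
    intro r hr0 hr1
    refine DifferentiableOn.hasFPowerSeriesOnBall (hg.mono ?_) hr0
    intro x hx
    simp only [mem_closedBall, dist_zero_right] at hx
    simp only [mem_ball, dist_zero_right]
    exact lt_of_le_of_lt hx hr1
  set q := cauchyPowerSeries g 0 (1/2 : NNReal) with hq
  refine ⟨q.coeff, fun z hz => ?_⟩
  simp only [mem_ball, dist_zero_right] at hz
  obtain ⟨r, hr1, hr2⟩ := exists_between hz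
  have hr0 : 0 ≤ r := le_trans (norm_nonneg z) hr1.le
  set r' : NNReal := ⟨r, hr0⟩ with hr'
  have h1 : HasFPowerSeriesOnBall g (cauchyPowerSeries g 0 r') 0 r' :=
    key r' (NNReal.coe_pos.mp (lt_of_le_of_lt (norm_nonneg z) hr1 : (0:ℝ) < r')) (by simpa [hr'])
  have h2 : HasFPowerSeriesOnBall g q 0 (1/2 : NNReal) :=
    key _ (by norm_num) (by norm_num)
  have heq : q = cauchyPowerSeries g 0 r' :=
    h2.hasFPowerSeriesAt.eq_formalMultilinearSeries h1.hasFPowerSeriesAt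
  have hmem : z ∈ Metric.eball (0 : ℂ) r' := by
    rw [emetric_ball_nnreal]
    rw [mem_ball, dist_zero_right]; exact hr1
  have h3 := h1.hasSum hmem
  rw [← heq, zero_add] at h3
  simpa only [FormalMultilinearSeries.apply_eq_pow_smul_coeff, smul_eq_mul, mul_comm] using h3

/-- Term-by-term differentiation: `∑ b j z^j = g z` implies `∑ (j b j) z^j = z g'(z)`. -/
lemma deriv_rep (b : ℕ → ℂ) (g : ℂ → ℂ)
    (h : ∀ z ∈ ball (0 : ℂ) 1, HasSum (fun j : ℕ => b j * z ^ j) (g z)) :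
    ∀ z ∈ ball (0 : ℂ) 1, HasSum (fun j : ℕ => (j : ℂ) * b j * z ^ j) (z * deriv g z) := by
  intro z hz
  have hp := hasFPS b g h
  have hd := hp.fderiv
  have hz' : z ∈ Metric.eball (0 : ℂ) 1 := by
    have h1 : (1 : ENNReal) = ((1 : NNReal) : ENNReal) := by norm_num
    rw [h1, emetric_ball_nnreal]
    simpa using hz
  have h1 : HasSum (fun n => (mkSeries b).derivSeries n fun _ => z) (fderiv ℂ g (0 + z)) :=
    hd.hasSum hz'
  rw [zero_add] at h1
  have h2 : HasSum (fun n => ((mkSeries b).derivSeries n fun _ => z) z) (fderiv ℂ g z z) :=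
    h1.mapL (ContinuousLinearMap.apply ℂ ℂ z)
  have h3 : ∀ n : ℕ, ((mkSeries b).derivSeries n fun _ => z) z
      = (fun j : ℕ => (j : ℂ) * b j * z ^ j) (n + 1) := by
    intro n
    rw [FormalMultilinearSeries.derivSeries_apply_diag, mkSeries_apply]
    push_cast
    ring
  rw [funext h3] at h2
  have h4 : fderiv ℂ g z z = z * deriv g z := by
    have hzz : fderiv ℂ g z z = fderiv ℂ g z (z • (1 : ℂ)) := by simp
    rw [hzz, (fderiv ℂ g z).map_smul, deriv]
    rw [smul_eq_mul]
  rw [h4] at h2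
  have h0 : (z * deriv g z) - ∑ i ∈ range 1, (fun j : ℕ => (j : ℂ) * b j * z ^ j) i
      = z * deriv g z := by simp
  rw [← h0] at h2
  exact (hasSum_nat_add_iff' 1).mp h2

lemma discrete_parseval (b : ℕ → ℂ) {m N : ℕ} (hN : 0 < N) (hm : m ≤ N) (r : ℝ) :
    ∑ k ∈ range N, ‖∑ j ∈ range m, b j * ((r : ℂ) * Complex.exp (2 * Real.pi * I / N) ^ k) ^ j‖ ^ 2
      = N * ∑ j ∈ range m, ‖b j‖ ^ 2 * r ^ (2 * j) := by
  set ζ : ℂ := Complex.exp (2 * Real.pi * I / N) with hζdef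
  have hprim : IsPrimitiveRoot ζ N := Complex.isPrimitiveRoot_exp N hN.ne'
  have hζN : ζ ^ N = 1 := hprim.pow_eq_one
  have hζ0 : ζ ≠ 0 := by
    intro h
    rw [h, zero_pow hN.ne'] at hζN
    exact zero_ne_one hζN
  have habs1 : ‖ζ‖ = 1 := by
    rw [hζdef, Complex.norm_exp]
    have : (2 * (Real.pi : ℂ) * I / N).re = 0 := by
      simp [Complex.div_re, Complex.mul_re, Complex.mul_im]
    rw [this, Real.exp_zero]
  have hconj : (starRingEnd ℂ) ζ = ζ⁻¹ := by
    have h1 : ζ * (starRingEnd ℂ) ζ = 1 := by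
      rw [Complex.mul_conj]
      norm_cast
      rw [Complex.normSq_eq_norm_sq, habs1, one_pow]
    field_simp
    linear_combination h1
  set c : ℕ → ℂ := fun j => b j * (r : ℂ) ^ j with hcdef
  -- orthogonality
  have key : ∀ j ∈ range m, ∀ j' ∈ range m,
      ∑ k ∈ range N, ((ζ ^ k) ^ j * (starRingEnd ℂ) ((ζ ^ k) ^ j'))
        = if j = j' then (N : ℂ) else 0 := by
    intro j hj j' hj'
    rw [mem_range] at hj hj'
    have hterm : ∀ k ∈ range N, (ζ ^ k) ^ j * (starRingEnd ℂ) ((ζ ^ k) ^ j')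
        = (ζ ^ j * (ζ⁻¹) ^ j') ^ k := by
      intro k _
      rw [map_pow, map_pow, hconj]
      ring
    rw [Finset.sum_congr rfl hterm]
    by_cases hjj : j = j'
    · subst hjj
      have : ζ ^ j * ζ⁻¹ ^ j = 1 := by
        rw [inv_pow, mul_inv_cancel₀ (pow_ne_zero _ hζ0)]
      rw [this]
      simp
    · have hμN : (ζ ^ j * ζ⁻¹ ^ j') ^ N = 1 := by
        rw [mul_pow, ← pow_mul, ← pow_mul, mul_comm j N, mul_comm j' N, pow_mul, pow_mul,
          hζN, inv_pow, hζN]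
        simp
      have hμ1 : ζ ^ j * ζ⁻¹ ^ j' ≠ 1 := by
        intro h
        have : ζ ^ j = ζ ^ j' := by
          rw [inv_pow, mul_inv_eq_one₀ (pow_ne_zero _ hζ0)] at h
          exact h
        exact hjj (hprim.pow_inj (lt_of_lt_of_le hj hm) (lt_of_lt_of_le hj' hm) this)
      rw [geom_sum_eq hμ1, hμN, if_neg hjj]
      simp
  -- the complex-level identity
  have main : ∑ k ∈ range N, ((∑ j ∈ range m, c j * (ζ ^ k) ^ j) *
        (starRingEnd ℂ) (∑ j ∈ range m, c j * (ζ ^ k) ^ j))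
      = (N : ℂ) * ∑ j ∈ range m, (c j * (starRingEnd ℂ) (c j)) := by
    have step1 : ∀ k ∈ range N, (∑ j ∈ range m, c j * (ζ ^ k) ^ j) *
        (starRingEnd ℂ) (∑ j ∈ range m, c j * (ζ ^ k) ^ j)
        = ∑ j ∈ range m, ∑ j' ∈ range m,
            (c j * (starRingEnd ℂ) (c j')) * ((ζ ^ k) ^ j * (starRingEnd ℂ) ((ζ ^ k) ^ j')) := by
      intro k _
      rw [map_sum, Finset.sum_mul_sum]
      refine Finset.sum_congr rfl fun j _ => Finset.sum_congr rfl fun j' _ => ?_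
      rw [map_mul]
      ring
    rw [Finset.sum_congr rfl step1, Finset.sum_comm]
    have step2 : ∀ j ∈ range m,
        ∑ k ∈ range N, ∑ j' ∈ range m,
            (c j * (starRingEnd ℂ) (c j')) * ((ζ ^ k) ^ j * (starRingEnd ℂ) ((ζ ^ k) ^ j'))
        = c j * (starRingEnd ℂ) (c j) * N := by
      intro j hj
      rw [Finset.sum_comm]
      have : ∀ j' ∈ range m,
          ∑ k ∈ range N, (c j * (starRingEnd ℂ) (c j')) * ((ζ ^ k) ^ j * (starRingEnd ℂ) ((ζ ^ k) ^ j'))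
          = if j = j' then c j * (starRingEnd ℂ) (c j') * N else 0 := by
        intro j' hj'
        rw [← Finset.mul_sum, key j hj j' hj']
        split_ifs with h
        · ring
        · ring
      rw [Finset.sum_congr rfl this]
      simp only [Finset.sum_ite_eq, mem_range]
      rw [if_pos (mem_range.mp hj)]
    rw [Finset.sum_congr rfl step2, ← Finset.sum_mul]
    ring
  -- take real parts
  have hP : ∀ k ∈ range N, ‖∑ j ∈ range m, b j * ((r : ℂ) * ζ ^ k) ^ j‖ ^ 2
      = ((∑ j ∈ range m, c j * (ζ ^ k) ^ j) *
          (starRingEnd ℂ) (∑ j ∈ range m, c j * (ζ ^ k) ^ j)).re := by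
    intro k _
    have hPS : ∑ j ∈ range m, b j * ((r : ℂ) * ζ ^ k) ^ j
        = ∑ j ∈ range m, c j * (ζ ^ k) ^ j := by
      refine Finset.sum_congr rfl fun j _ => ?_
      rw [hcdef, mul_pow]
      ring
    rw [hPS, Complex.mul_conj]
    rw [Complex.ofReal_re, Complex.normSq_eq_norm_sq]
  rw [Finset.sum_congr rfl hP, ← Complex.re_sum, main]
  have hcc : ∀ j ∈ range m, c j * (starRingEnd ℂ) (c j)
      = ((‖b j‖ ^ 2 * r ^ (2 * j) : ℝ) : ℂ) := by
    intro j _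
    rw [Complex.mul_conj, hcdef]
    have h9 : Complex.normSq (b j * (r : ℂ) ^ j) = ‖b j‖ ^ 2 * r ^ (2 * j) := by
      rw [Complex.normSq_mul, map_pow, Complex.normSq_eq_norm_sq,
        Complex.normSq_ofReal, pow_mul]
      ring
    rw [h9]
  rw [Finset.sum_congr rfl hcc, ← Complex.ofReal_sum, ← Complex.ofReal_natCast,
    ← Complex.ofReal_mul, Complex.ofReal_re]

lemma abs_zeta (N : ℕ) : ‖Complex.exp (2 * Real.pi * I / N)‖ = 1 := by
  rw [Complex.norm_exp]
  have : (2 * (Real.pi : ℂ) * I / N).re = 0 := by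
    simp [Complex.div_re, Complex.mul_re, Complex.mul_im]
  rw [this, Real.exp_zero]

lemma bessel_clunie (c Hc : ℕ → ℂ) (φ : ℂ → ℂ) (s : ℕ)
    (hφ : ∀ z ∈ ball (0 : ℂ) 1, HasSum (fun j : ℕ => c j * z ^ j) (φ z))
    (hb : ∀ z ∈ ball (0 : ℂ) 1, ‖φ z‖ ≤ ‖∑ j ∈ range s, Hc j * z ^ j‖) :
    ∑ j ∈ range (s + 1), ‖c j‖ ^ 2 ≤ ∑ j ∈ range s, ‖Hc j‖ ^ 2 := by
  -- Step 1: the inequality at each radius r < 1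
  have key : ∀ r : ℝ, 0 ≤ r → r < 1 →
      ∑ j ∈ range (s + 1), ‖c j‖ ^ 2 * r ^ (2 * j)
        ≤ ∑ j ∈ range s, ‖Hc j‖ ^ 2 * r ^ (2 * j) := by
    intro r hr0 hr1
    set K : ℝ := ∑ j ∈ range s, ‖Hc j‖ with hK
    have hK0 : 0 ≤ K := Finset.sum_nonneg fun j _ => norm_nonneg _
    have hSK : ∀ z : ℂ, ‖z‖ ≤ 1 → ‖∑ j ∈ range s, Hc j * z ^ j‖ ≤ K := by
      intro z hz
      refine le_trans (norm_sum_le _ _) (Finset.sum_le_sum fun j _ => ?_)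
      rw [norm_mul, norm_pow]
      calc ‖Hc j‖ * ‖z‖ ^ j ≤ ‖Hc j‖ * 1 :=
            mul_le_mul_of_nonneg_left (pow_le_one₀ (norm_nonneg z) hz) (norm_nonneg _)
        _ = ‖Hc j‖ := mul_one _
    have sumc : Summable (fun j => ‖c j‖ * r ^ j) := summable_coeff c φ hφ hr0 hr1
    set T : ℕ → ℝ := fun M => ∑' k : ℕ, ‖c (k + (M + 1))‖ * r ^ (k + (M + 1)) with hT
    have hT0 : ∀ M, 0 ≤ T M := fun M => tsum_nonneg fun k => by positivity
    have hTtend : Filter.Tendsto T Filter.atTop (nhds 0) := by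
      have h1 := tendsto_sum_nat_add (fun j => ‖c j‖ * r ^ j)
      exact h1.comp (Filter.tendsto_add_atTop_nat 1)
    have hM : ∀ M : ℕ, s ≤ M →
        ∑ j ∈ range (s + 1), ‖c j‖ ^ 2 * r ^ (2 * j)
          ≤ ∑ j ∈ range s, ‖Hc j‖ ^ 2 * r ^ (2 * j) + (2 * T M * K + T M ^ 2) := by
      intro M hMs
      set ζ : ℂ := Complex.exp (2 * Real.pi * I / (M + 1 : ℕ)) with hζdef
      have hζabs : ‖ζ‖ = 1 := abs_zeta (M + 1)
      have hζn : ‖ζ‖ = 1 := by rw [hζabs]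
      have hptnorm : ∀ k : ℕ, ‖(r : ℂ) * ζ ^ k‖ = r := by
        intro k
        rw [norm_mul, norm_pow, hζn, one_pow, mul_one,
          Complex.norm_real, Real.norm_eq_abs, _root_.abs_of_nonneg hr0]
      have hptball : ∀ k : ℕ, ((r : ℂ) * ζ ^ k) ∈ ball (0 : ℂ) 1 := by
        intro k
        rw [mem_ball, dist_zero_right, hptnorm]
        exact hr1
      -- tail estimate
      have htail : ∀ k : ℕ, ‖∑ j ∈ range (M + 1), c j * ((r : ℂ) * ζ ^ k) ^ j‖
          ≤ ‖∑ j ∈ range s, Hc j * ((r : ℂ) * ζ ^ k) ^ j‖ + T M := by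
        intro k
        set z : ℂ := (r : ℂ) * ζ ^ k with hzdef
        have hz : z ∈ ball (0 : ℂ) 1 := hptball k
        have h1 := hφ z hz
        have h2 : HasSum (fun n : ℕ => c (n + (M + 1)) * z ^ (n + (M + 1)))
            (φ z - ∑ j ∈ range (M + 1), c j * z ^ j) :=
          (hasSum_nat_add_iff' (M + 1)).mpr h1
        have hs4 : Summable (fun n : ℕ => ‖c (n + (M + 1))‖ * r ^ (n + (M + 1))) :=
          (summable_nat_add_iff (M + 1)).mpr sumc
        have h3 : ‖φ z - ∑ j ∈ range (M + 1), c j * z ^ j‖ ≤ T M := by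
          rw [← h2.tsum_eq]
          have hnormeq : ∀ n : ℕ, ‖c (n + (M + 1)) * z ^ (n + (M + 1))‖
              = ‖c (n + (M + 1))‖ * r ^ (n + (M + 1)) := by
            intro n
            rw [norm_mul, norm_pow, hptnorm k]
          refine le_trans (norm_tsum_le_tsum_norm (hs4.congr fun n => (hnormeq n).symm)) ?_
          rw [hT]
          exact le_of_eq (tsum_congr hnormeq)
        calc ‖∑ j ∈ range (M + 1), c j * z ^ j‖
            = ‖φ z - (φ z - ∑ j ∈ range (M + 1), c j * z ^ j)‖ := by rw [sub_sub_cancel]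
          _ ≤ ‖φ z‖ + ‖φ z - ∑ j ∈ range (M + 1), c j * z ^ j‖ := norm_sub_le _ _
          _ ≤ ‖∑ j ∈ range s, Hc j * z ^ j‖ + T M := add_le_add (hb z hz) h3
      -- assemble with discrete Parseval
      have hNpos : 0 < M + 1 := Nat.succ_pos M
      have dp1 := discrete_parseval c hNpos (le_refl (M + 1)) r
      have dp2 := discrete_parseval Hc hNpos (by omega : s ≤ M + 1) r
      rw [← hζdef] at dp1 dp2
      have chain : ((M + 1 : ℕ) : ℝ) * ∑ j ∈ range (M + 1), ‖c j‖ ^ 2 * r ^ (2 * j)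
          ≤ ((M + 1 : ℕ) : ℝ) * (∑ j ∈ range s, ‖Hc j‖ ^ 2 * r ^ (2 * j)
            + (2 * T M * K + T M ^ 2)) := by
        rw [← dp1]
        have perk : ∀ k ∈ range (M + 1),
            ‖∑ j ∈ range (M + 1), c j * ((r : ℂ) * ζ ^ k) ^ j‖ ^ 2
              ≤ ‖∑ j ∈ range s, Hc j * ((r : ℂ) * ζ ^ k) ^ j‖ ^ 2
                + (2 * T M * K + T M ^ 2) := by
          intro k _
          have h5 := htail k
          have h6 := hSK ((r : ℂ) * ζ ^ k) (le_of_lt (by rw [hptnorm k]; exact hr1))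
          set CC := ‖∑ j ∈ range (M + 1), c j * ((r : ℂ) * ζ ^ k) ^ j‖ with hCC
          set SS := ‖∑ j ∈ range s, Hc j * ((r : ℂ) * ζ ^ k) ^ j‖ with hSS
          have h7 : (0 : ℝ) ≤ CC := norm_nonneg _
          have h8 : (0 : ℝ) ≤ SS := norm_nonneg _
          nlinarith [hT0 M]
        calc ∑ k ∈ range (M + 1), ‖∑ j ∈ range (M + 1), c j * ((r : ℂ) * ζ ^ k) ^ j‖ ^ 2
            ≤ ∑ k ∈ range (M + 1), (‖∑ j ∈ range s, Hc j * ((r : ℂ) * ζ ^ k) ^ j‖ ^ 2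
              + (2 * T M * K + T M ^ 2)) := Finset.sum_le_sum perk
          _ = (∑ k ∈ range (M + 1), ‖∑ j ∈ range s, Hc j * ((r : ℂ) * ζ ^ k) ^ j‖ ^ 2)
              + (M + 1 : ℕ) * (2 * T M * K + T M ^ 2) := by
            rw [Finset.sum_add_distrib, Finset.sum_const, card_range, nsmul_eq_mul]
          _ = ((M + 1 : ℕ) : ℝ) * ∑ j ∈ range s, ‖Hc j‖ ^ 2 * r ^ (2 * j)
              + (M + 1 : ℕ) * (2 * T M * K + T M ^ 2) := by rw [dp2]
          _ = ((M + 1 : ℕ) : ℝ) * (∑ j ∈ range s, ‖Hc j‖ ^ 2 * r ^ (2 * j)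
              + (2 * T M * K + T M ^ 2)) := by ring
      have hMpos : (0 : ℝ) < ((M + 1 : ℕ) : ℝ) := by positivity
      have hsub : ∑ j ∈ range (s + 1), ‖c j‖ ^ 2 * r ^ (2 * j)
          ≤ ∑ j ∈ range (M + 1), ‖c j‖ ^ 2 * r ^ (2 * j) :=
        Finset.sum_le_sum_of_subset_of_nonneg (range_subset_range.mpr (by omega))
          (fun j _ _ => by positivity)
      exact le_of_mul_le_mul_left
        (le_trans (mul_le_mul_of_nonneg_left hsub hMpos.le) chain) hMpos
    -- conclude by letting M → ∞
    have hlim : Filter.Tendsto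
        (fun M => ∑ j ∈ range s, ‖Hc j‖ ^ 2 * r ^ (2 * j) + (2 * T M * K + T M ^ 2))
        Filter.atTop (nhds (∑ j ∈ range s, ‖Hc j‖ ^ 2 * r ^ (2 * j))) := by
      have h1 : Filter.Tendsto (fun M => 2 * T M * K + T M ^ 2) Filter.atTop (nhds 0) := by
        have h2 := ((hTtend.const_mul 2).mul_const K).add (hTtend.mul hTtend)
        simp only [mul_zero, zero_mul, add_zero, zero_add] at h2
        refine h2.congr fun M => ?_
        ring
      have h3 := (tendsto_const_nhds (x := ∑ j ∈ range s, ‖Hc j‖ ^ 2 * r ^ (2 * j))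
        (f := Filter.atTop (α := ℕ))).add h1
      simpa using h3
    exact ge_of_tendsto hlim (Filter.eventually_atTop.mpr ⟨s, hM⟩)
  -- Step 2: let r → 1
  have cont1 : Continuous (fun r : ℝ => ∑ j ∈ range (s + 1), ‖c j‖ ^ 2 * r ^ (2 * j)) := by
    continuity
  have cont2 : Continuous (fun r : ℝ => ∑ j ∈ range s, ‖Hc j‖ ^ 2 * r ^ (2 * j)) := by
    continuity
  have t1 : Filter.Tendsto (fun r : ℝ => ∑ j ∈ range (s + 1), ‖c j‖ ^ 2 * r ^ (2 * j))
      (nhdsWithin 1 (Set.Iio 1)) (nhds (∑ j ∈ range (s + 1), ‖c j‖ ^ 2 * (1 : ℝ) ^ (2 * j))) :=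
    (cont1.tendsto 1).mono_left nhdsWithin_le_nhds
  have t2 : Filter.Tendsto (fun r : ℝ => ∑ j ∈ range s, ‖Hc j‖ ^ 2 * r ^ (2 * j))
      (nhdsWithin 1 (Set.Iio 1)) (nhds (∑ j ∈ range s, ‖Hc j‖ ^ 2 * (1 : ℝ) ^ (2 * j))) :=
    (cont2.tendsto 1).mono_left nhdsWithin_le_nhds
  have ev : ∀ᶠ r in nhdsWithin (1 : ℝ) (Set.Iio 1),
      (fun r : ℝ => ∑ j ∈ range (s + 1), ‖c j‖ ^ 2 * r ^ (2 * j)) r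
        ≤ (fun r : ℝ => ∑ j ∈ range s, ‖Hc j‖ ^ 2 * r ^ (2 * j)) r := by
    filter_upwards [Ioo_mem_nhdsLT_of_mem (show (1 : ℝ) ∈ Set.Ioc 0 1 by norm_num)] with r hr
    exact key r hr.1.le hr.2
  have := le_of_tendsto_of_tendsto t1 t2 ev
  simpa using this

/-- For `f ∈ S*[A,B]` with `-1 ≤ B ≤ 1 < A`, a positive integer `t`, and
`(z/f(z))^t = 1 + ∑_{j≥1} a_j z^j` on the disc, for every `s ≥ 1`:
`s² |a_s|² ≤ (A-B)²t² + ∑_{j=1}^{s-1} (((A-B)t + Bj)² - j²) |a_j|²`. -/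
theorem coeff_power_inequality (A B : ℝ) (hB₁ : -1 ≤ B) (hB₂ : B ≤ 1) (hA : 1 < A)
    (f : ℂ → ℂ) (hf : MemSstar A B f)
    (t : ℕ) (ht : 1 ≤ t)
    (a : ℕ → ℂ) (ha0 : a 0 = 1)
    (ha : ∀ z ∈ ball (0 : ℂ) 1, z ≠ 0 →
      HasSum (fun j : ℕ => a j * z ^ j) ((z / f z) ^ t))
    (s : ℕ) (hs : 1 ≤ s) :
    (s : ℝ) ^ 2 * ‖a s‖ ^ 2 ≤ (A - B) ^ 2 * (t : ℝ) ^ 2 +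
      ∑ j ∈ Finset.Ico 1 s,
        ((((A - B) * (t : ℝ) + B * (j : ℝ)) ^ 2 - (j : ℝ) ^ 2) * ‖a j‖ ^ 2) := by
  obtain ⟨hfa, hf0, hfd1, hfne, p, ⟨hpa, hp1, w, hwa, hw0, hwlt, hpw⟩, hpf⟩ := hf
  -- the function G(z) = (z/f z)^t as a power series
  set G : ℂ → ℂ := fun z => ∑' j : ℕ, a j * z ^ j with hGdef
  have hG : ∀ z ∈ ball (0 : ℂ) 1, HasSum (fun j : ℕ => a j * z ^ j) (G z) := by
    intro z hz
    refine Summable.hasSum ?_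
    by_cases h : z = 0
    · subst h
      exact (hasSum_single 0 (fun b' hb' => by simp [zero_pow hb'])).summable
    · exact (ha z hz h).summable
  have hGeq : ∀ z ∈ ball (0 : ℂ) 1, z ≠ 0 → G z = (z / f z) ^ t :=
    fun z hz h0 => (ha z hz h0).tsum_eq
  have hGps := hasFPS a G hG
  have hGdiff : DifferentiableOn ℂ G (ball (0 : ℂ) 1) := by
    have := hGps.differentiableOn
    refine DifferentiableOn.mono this ?_
    intro z hz
    have h1 : ((1 : NNReal) : ENNReal) = 1 := by norm_num
    rw [← h1, emetric_ball_nnreal]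
    simpa using hz
  have hFs : ∀ z ∈ ball (0 : ℂ) 1,
      HasSum (fun j : ℕ => (j : ℂ) * a j * z ^ j) (z * deriv G z) := deriv_rep a G hG
  -- abbreviations
  set Fz : ℂ → ℂ := fun z => z * deriv G z with hFzdef
  -- norm of B as complex scalar
  have hBw : ∀ z ∈ ball (0 : ℂ) 1, (1 : ℂ) + B * w z ≠ 0 := by
    intro z hz h
    have h1 : ‖(B : ℂ) * w z‖ < 1 := by
      rw [norm_mul, Complex.norm_real, Real.norm_eq_abs]
      calc |B| * ‖w z‖ ≤ 1 * ‖w z‖ :=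
            mul_le_mul_of_nonneg_right (abs_le.mpr ⟨hB₁, hB₂⟩) (norm_nonneg _)
        _ = ‖w z‖ := one_mul _
        _ < 1 := hwlt z hz
    have h2 : (B : ℂ) * w z = -1 := by linear_combination h
    rw [h2] at h1
    simp at h1
  -- the key differential identity
  have hkey : ∀ z ∈ ball (0 : ℂ) 1,
      Fz z = w z * (((B : ℂ) - A) * t * G z - B * Fz z) := by
    intro z hz
    by_cases h0 : z = 0
    · subst h0
      simp [hFzdef, hw0]
    · have hfz : f z ≠ 0 := hfne z hz h0
      have hfdz : HasDerivAt f (deriv f z) z :=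
        ((hfa z hz).differentiableAt).hasDerivAt
      have hq : HasDerivAt (fun y => y / f y)
          ((1 * f z - z * deriv f z) / f z ^ 2) z := (hasDerivAt_id z).div hfdz hfz
      have hqt : HasDerivAt (fun y => (y / f y) ^ t)
          ((t : ℂ) * (z / f z) ^ (t - 1) * ((1 * f z - z * deriv f z) / f z ^ 2)) z :=
        hq.pow t
      have hGderiv : deriv G z
          = (t : ℂ) * (z / f z) ^ (t - 1) * ((1 * f z - z * deriv f z) / f z ^ 2) := by
        have hopen : IsOpen (ball (0 : ℂ) 1 \ {0}) :=
          IsOpen.sdiff isOpen_ball isClosed_singleton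
        have hev : G =ᶠ[nhds z] fun y => (y / f y) ^ t := by
          refine Filter.eventuallyEq_of_mem (hopen.mem_nhds ⟨hz, h0⟩) ?_
          intro y hy
          exact hGeq y hy.1 hy.2
        rw [hev.deriv_eq]
        exact hqt.deriv
      -- relation from the subordination
      have hrel : z * deriv f z * (1 + (B : ℂ) * w z) = f z * (1 + (A : ℂ) * w z) := by
        have h1 := hpf z hz h0
        have h2 := hpw z hz
        rw [h1] at h2
        rw [div_eq_div_iff hfz (hBw z hz)] at h2
        linear_combination h2
      -- the algebraic computation
      have hpow : (z / f z) ^ t = (z / f z) ^ (t - 1) * (z / f z) := by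
        rw [← pow_succ, Nat.sub_add_cancel ht]
      rw [hFzdef]
      simp only
      rw [hGderiv, hGeq z hz h0, hpow]
      set u : ℂ := (z / f z) ^ (t - 1) with hu
      clear_value u
      field_simp
      linear_combination (-((t : ℂ) * u)) * hrel
  -- coefficients of H
  set Hc : ℕ → ℂ := fun j => (((B : ℂ) - A) * t - B * j) * a j with hHcdef
  set Hfun : ℂ → ℂ := fun z => ((B : ℂ) - A) * t * G z - B * Fz z with hHfundef
  have hHs : ∀ z ∈ ball (0 : ℂ) 1, HasSum (fun j : ℕ => Hc j * z ^ j) (Hfun z) := by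
    intro z hz
    have h1 := ((hG z hz).mul_left (((B : ℂ) - A) * t)).sub ((hFs z hz).mul_left (B : ℂ))
    have heq : (fun j : ℕ => Hc j * z ^ j)
        = fun j : ℕ => ((B : ℂ) - A) * t * (a j * z ^ j) - (B : ℂ) * ((j : ℂ) * a j * z ^ j) :=
      funext fun j => by rw [hHcdef]; ring
    rw [heq]
    exact h1
  -- the polynomial S and difference D
  set S : ℂ → ℂ := fun z => ∑ j ∈ range s, Hc j * z ^ j with hSdef
  set Dc : ℕ → ℂ := fun j => if j < s then 0 else Hc j with hDcdef
  set D : ℂ → ℂ := fun z => Hfun z - S z with hDdef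
  have hDs : ∀ z ∈ ball (0 : ℂ) 1, HasSum (fun j : ℕ => Dc j * z ^ j) (D z) := by
    intro z hz
    have h2 : HasSum (fun j : ℕ => (if j < s then Hc j else 0) * z ^ j) (S z) := by
      have h3 : ∀ j ∉ range s, (if j < s then Hc j else 0) * z ^ j = 0 := by
        intro j hj
        rw [mem_range] at hj
        rw [if_neg hj, zero_mul]
      have h4 : HasSum (fun j : ℕ => (if j < s then Hc j else 0) * z ^ j)
          (∑ j ∈ range s, (if j < s then Hc j else 0) * z ^ j) := hasSum_sum_of_ne_finset_zero h3
      have h5 : ∑ j ∈ range s, (if j < s then Hc j else 0) * z ^ j = S z := by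
        refine Finset.sum_congr rfl fun j hj => ?_
        rw [if_pos (mem_range.mp hj)]
      rwa [h5] at h4
    have h6 := (hHs z hz).sub h2
    have heq : (fun j : ℕ => Dc j * z ^ j)
        = fun j : ℕ => Hc j * z ^ j - (if j < s then Hc j else 0) * z ^ j := by
      funext j
      rw [hDcdef]
      by_cases h : j < s
      · simp [h]
      · simp [h]
    rw [heq]
    exact h6
  -- the factored tail E
  set E : ℂ → ℂ := fun z => ∑' n : ℕ, Dc (n + s) * z ^ n with hEdef
  have hEs : ∀ z ∈ ball (0 : ℂ) 1, HasSum (fun n : ℕ => Dc (n + s) * z ^ n) (E z) := by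
    intro z hz
    refine Summable.hasSum ?_
    by_cases h0 : z = 0
    · subst h0
      exact (hasSum_single 0 (fun b' hb' => by simp [zero_pow hb'])).summable
    · have h1 : HasSum (fun n : ℕ => Dc (n + s) * z ^ (n + s))
          (D z - ∑ i ∈ range s, Dc i * z ^ i) := (hasSum_nat_add_iff' s).mpr (hDs z hz)
      have h2 := h1.mul_right ((z ^ s)⁻¹)
      have heq : (fun n : ℕ => Dc (n + s) * z ^ (n + s) * (z ^ s)⁻¹)
          = fun n : ℕ => Dc (n + s) * z ^ n := by
        funext n
        rw [pow_add]
        field_simp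
      rw [heq] at h2
      exact h2.summable
  have hsum0 : ∑ i ∈ range s, Dc i * ((0:ℂ) ^ i) = 0 := by
    refine Finset.sum_eq_zero fun i hi => ?_
    rw [hDcdef]
    simp [mem_range.mp hi]
  have hDE : ∀ z ∈ ball (0 : ℂ) 1, D z = z ^ s * E z := by
    intro z hz
    by_cases h0 : z = 0
    · subst h0
      have h1 := hDs 0 (by simp)
      have h2 : HasSum (fun j : ℕ => Dc j * (0:ℂ) ^ j) (Dc 0 * (0:ℂ) ^ 0) :=
        hasSum_single 0 (fun b' hb' => by simp [zero_pow hb'])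
      have h3 : D 0 = Dc 0 * (0:ℂ) ^ 0 := h1.unique h2
      have h4 : Dc 0 = 0 := by
        show (if 0 < s then (0:ℂ) else Hc 0) = 0
        rw [if_pos (by omega : 0 < s)]
      rw [h3, h4, zero_pow (by omega : s ≠ 0)]
      ring
    · have h1 : HasSum (fun n : ℕ => Dc (n + s) * z ^ (n + s))
          (D z - ∑ i ∈ range s, Dc i * z ^ i) := (hasSum_nat_add_iff' s).mpr (hDs z hz)
      have h2 := (hEs z hz).mul_right (z ^ s)
      have heq : (fun n : ℕ => Dc (n + s) * z ^ n * z ^ s)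
          = fun n : ℕ => Dc (n + s) * z ^ (n + s) := by
        funext n
        rw [pow_add]
        ring
      rw [heq] at h2
      have h5 : ∑ i ∈ range s, Dc i * z ^ i = 0 := by
        refine Finset.sum_eq_zero fun i hi => ?_
        rw [hDcdef]
        simp [mem_range.mp hi]
      have h6 := h1.unique h2
      rw [h5, sub_zero] at h6
      rw [h6]
      ring
  -- differentiability facts
  have hwdiff : DifferentiableOn ℂ w (ball (0 : ℂ) 1) := hwa.differentiableOn
  have hSdiff : DifferentiableOn ℂ S (ball (0 : ℂ) 1) := by
    apply Differentiable.differentiableOn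
    apply Differentiable.fun_sum
    intro j _
    exact (differentiable_const _).mul (differentiable_pow j)
  have hEdiff : DifferentiableOn ℂ E (ball (0 : ℂ) 1) := by
    have := (hasFPS (fun n => Dc (n + s)) E hEs).differentiableOn
    refine DifferentiableOn.mono this ?_
    intro z hz
    have h1 : ((1 : NNReal) : ENNReal) = 1 := by norm_num
    rw [← h1, emetric_ball_nnreal]
    simpa using hz
  -- φ = w * S and its coefficients
  set φ : ℂ → ℂ := fun z => w z * S z with hφdef
  obtain ⟨c, hc⟩ := exists_rep φ (hwdiff.mul hSdiff)
  -- ρ = w * E and its coefficients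
  set ρ : ℂ → ℂ := fun z => w z * E z with hρdef
  obtain ⟨d, hd⟩ := exists_rep ρ (hwdiff.mul hEdiff)
  have hball0 : (0 : ℂ) ∈ ball (0 : ℂ) 1 := by simp
  have hd0 : d 0 = 0 := by
    have h1 := hd 0 hball0
    have h2 : HasSum (fun j : ℕ => d j * (0:ℂ) ^ j) (d 0 * (0:ℂ) ^ 0) :=
      hasSum_single 0 (fun b' hb' => by simp [zero_pow hb'])
    have h3 : ρ 0 = d 0 * (0:ℂ) ^ 0 := h1.unique h2
    rw [hρdef] at h3
    simp only [hw0, zero_mul] at h3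
    simpa using h3.symm
  -- ψ = Fz - φ and its coefficients
  set ψc : ℕ → ℂ := fun j => if j < s then 0 else d (j - s) with hψcdef
  have hψs : ∀ z ∈ ball (0 : ℂ) 1,
      HasSum (fun j : ℕ => ψc j * z ^ j) (Fz z - φ z) := by
    intro z hz
    have h1 := (hd z hz).mul_right (z ^ s)
    have h2 : Fz z - φ z = z ^ s * ρ z := by
      have h3 := hkey z hz
      have h4 := hDE z hz
      have h5 : D z = Hfun z - S z := rfl
      have h7 : φ z = w z * S z := rfl
      have h8 : ρ z = w z * E z := rfl
      have h9 : Fz z = w z * Hfun z := h3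
      rw [h7, h8, h9, ← mul_sub, ← h5, h4]
      ring
    rw [h2]
    have hinj : Function.Injective (fun n : ℕ => n + s) := fun x y h => Nat.add_right_cancel h
    rw [← Function.Injective.hasSum_iff hinj]
    · have heq : ((fun j : ℕ => ψc j * z ^ j) ∘ fun n : ℕ => n + s)
          = fun n : ℕ => d n * z ^ n * z ^ s := by
        funext n
        show (if n + s < s then (0:ℂ) else d (n + s - s)) * z ^ (n + s) = d n * z ^ n * z ^ s
        rw [if_neg (by omega), Nat.add_sub_cancel, pow_add]
        ring
      rw [heq]
      have h5 : z ^ s * ρ z = ρ z * z ^ s := by ring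
      rw [h5]
      exact h1
    · intro x hx
      have hxs : x < s := by
        by_contra hxs
        exact hx ⟨x - s, by show x - s + s = x; omega⟩
      show (if x < s then (0:ℂ) else d (x - s)) * z ^ x = 0
      rw [if_pos hxs, zero_mul]
  -- coefficient identification: c j = j * a j for j ≤ s
  have hcoeff : ∀ j : ℕ, (j : ℂ) * a j = c j + ψc j := by
    have h1 : ∀ z ∈ ball (0 : ℂ) 1,
        HasSum (fun j : ℕ => (c j + ψc j) * z ^ j) (Fz z) := by
      intro z hz
      have h2 := (hc z hz).add (hψs z hz)
      have heq : (fun j : ℕ => (c j + ψc j) * z ^ j)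
          = fun j : ℕ => c j * z ^ j + ψc j * z ^ j := by
        funext j; ring
      rw [heq]
      have h3 : φ z + (Fz z - φ z) = Fz z := by ring
      rwa [h3] at h2
    have := coeff_unique hFs h1
    intro j
    exact congrFun this j
  have hcj : ∀ j ≤ s, c j = (j : ℂ) * a j := by
    intro j hj
    have h1 := hcoeff j
    have h2 : ψc j = 0 := by
      rw [hψcdef]
      by_cases h : j < s
      · simp [h]
      · have hjs : j = s := by omega
        simp [h, hjs, hd0]
    rw [h2, add_zero] at h1
    exact h1.symm
  -- the Bessel-Clunie inequality
  have hbound : ∀ z ∈ ball (0 : ℂ) 1, ‖φ z‖ ≤ ‖∑ j ∈ range s, Hc j * z ^ j‖ := by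
    intro z hz
    rw [hφdef]
    simp only
    rw [norm_mul]
    calc ‖w z‖ * ‖S z‖ ≤ 1 * ‖S z‖ :=
          mul_le_mul_of_nonneg_right (hwlt z hz).le (norm_nonneg _)
      _ = ‖S z‖ := one_mul _
  have bessel := bessel_clunie c Hc φ s hc hbound
  -- final algebra
  have hcnorm : ∀ j ≤ s, ‖c j‖ ^ 2 = (j : ℝ) ^ 2 * ‖a j‖ ^ 2 := by
    intro j hj
    rw [hcj j hj, norm_mul]
    have : ‖(j : ℂ)‖ = (j : ℝ) := by
      rw [Complex.norm_natCast]
    rw [this]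
    ring
  have hHnorm : ∀ j : ℕ, ‖Hc j‖ ^ 2 = ((A - B) * t + B * j) ^ 2 * ‖a j‖ ^ 2 := by
    intro j
    rw [hHcdef]
    simp only
    rw [norm_mul]
    have h1 : ((B : ℂ) - A) * t - B * j = (((B - A) * t - B * j : ℝ) : ℂ) := by
      push_cast
      ring
    rw [h1, Complex.norm_real, Real.norm_eq_abs]
    rw [mul_pow, _root_.sq_abs]
    have h2 : ((B - A) * t - B * j : ℝ) ^ 2 = ((A - B) * t + B * j) ^ 2 := by ring
    rw [h2]
  -- expand the two sides of bessel
  have hL : ∑ j ∈ range (s + 1), ‖c j‖ ^ 2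
      = (s : ℝ) ^ 2 * ‖a s‖ ^ 2 + ∑ j ∈ range s, (j : ℝ) ^ 2 * ‖a j‖ ^ 2 := by
    rw [Finset.sum_range_succ, hcnorm s le_rfl]
    rw [Finset.sum_congr rfl fun j hj => hcnorm j (le_of_lt (mem_range.mp hj))]
    ring
  have hR : ∑ j ∈ range s, ‖Hc j‖ ^ 2
      = ∑ j ∈ range s, ((A - B) * t + B * j) ^ 2 * ‖a j‖ ^ 2 :=
    Finset.sum_congr rfl fun j _ => hHnorm j
  rw [hL, hR] at bessel
  have hsplit : ∀ X : ℕ → ℝ, ∑ j ∈ range s, X j = X 0 + ∑ j ∈ Ico 1 s, X j := by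
    intro X
    rw [range_eq_Ico, Finset.sum_eq_sum_Ico_succ_bot (by omega : 0 < s)]
  rw [hsplit (fun j => (j : ℝ) ^ 2 * ‖a j‖ ^ 2),
    hsplit (fun j => ((A - B) * t + B * j) ^ 2 * ‖a j‖ ^ 2)] at bessel
  have ha0n : ‖a 0‖ = 1 := by rw [ha0, norm_one]
  simp only [Nat.cast_zero, ha0n] at bessel
  have hsum_sub : ∑ j ∈ Finset.Ico 1 s,
      ((((A - B) * (t : ℝ) + B * (j : ℝ)) ^ 2 - (j : ℝ) ^ 2) * ‖a j‖ ^ 2)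
      = ∑ j ∈ Ico 1 s, ((A - B) * t + B * j) ^ 2 * ‖a j‖ ^ 2
        - ∑ j ∈ Ico 1 s, (j : ℝ) ^ 2 * ‖a j‖ ^ 2 := by
    rw [← Finset.sum_sub_distrib]
    refine Finset.sum_congr rfl fun j _ => ?_
    ring
  rw [hsum_sub]
  nlinarith [bessel]
end
end

section
/- Let -1 \le B < 1 and let f \in \mathfrak{I}[1,B]. Let g be the analytic function on \mathbb{D} with g(0) = 0 and g'(z) = (1-z)/(1-Bz). Write f^{-1}(w) = w + \sum_{n=2}^{\infty} \gamma_n w^n and g^{-1}(w) = w + \sum_{n=2}^{\infty} A_n w^n in some neighbourhood of the origin. Then |\gamma_n| \le A_n for every n \ge 2. -/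
open Complex Metric Finset

noncomputable section

/-- The class `𝔦[A,B]`: univalent normalized analytic functions `f` on the unit disc
with `f' ∈ P[A,B]`. -/
def MemI (A B : ℝ) (f : ℂ → ℂ) : Prop :=
  AnalyticOnNhd ℂ f (ball (0 : ℂ) 1) ∧ Set.InjOn f (ball (0 : ℂ) 1) ∧
    f 0 = 0 ∧ deriv f 0 = 1 ∧ MemP A B (deriv f)

section Helpers

lemma my_one_add_ne (w : ℂ) (hw : ‖w‖ < 1) : (1:ℂ) + w ≠ 0 := by
  intro h
  have hw1 : w = -1 := by linear_combination h
  rw [hw1] at hw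
  simp at hw

lemma my_one_sub_ne (w : ℂ) (hw : ‖w‖ < 1) : (1:ℂ) - w ≠ 0 := by
  intro h
  have hw1 : w = 1 := by linear_combination -h
  rw [hw1] at hw
  simp at hw

lemma my_re_inv (w : ℂ) (hw : ‖w‖ < 1) : 1/2 ≤ ((1+w)⁻¹).re := by
  have hne : (1:ℂ)+w ≠ 0 := my_one_add_ne w hw
  rw [Complex.inv_re]
  have h1 : Complex.normSq w < 1 := by
    rw [Complex.normSq_eq_norm_sq]
    nlinarith [norm_nonneg w]
  have hsq : Complex.normSq (1+w) ≤ 2*(1+w).re := by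
    simp only [Complex.normSq_apply, Complex.add_re, Complex.add_im, Complex.one_re,
      Complex.one_im, zero_add] at *
    nlinarith
  have hpos : 0 < Complex.normSq (1+w) := Complex.normSq_pos.mpr hne
  rw [div_le_div_iff₀ (by norm_num) hpos] at *
  nlinarith

end Helpers

lemma myOfScalars_coeff (c : ℕ → ℂ) (n : ℕ) :
    (FormalMultilinearSeries.ofScalars ℂ c).coeff n = c n := by
  simp [FormalMultilinearSeries.coeff, FormalMultilinearSeries.ofScalars, List.prod_ofFn]

lemma my_hasFPowerSeriesAt {c : ℕ → ℂ} {F : ℂ → ℂ} {r : ℝ} (hr : 0 < r)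
    (h : ∀ w : ℂ, ‖w‖ < r → HasSum (fun n : ℕ => c n * w ^ n) (F w)) :
    HasFPowerSeriesAt F (FormalMultilinearSeries.ofScalars ℂ c) 0 := by
  refine ⟨ENNReal.ofReal r, ?_, by simp [hr], ?_⟩
  · refine ENNReal.le_of_forall_nnreal_lt (fun t ht => ?_)
    have htr : (t : ℝ) < r := by
      rwa [ENNReal.lt_ofReal_iff_toReal_lt (by simp), ENNReal.coe_toReal] at ht
    have hsum : Summable (fun n : ℕ => c n * (t : ℂ) ^ n) := by
      refine (h (t : ℂ) ?_).summable
      simpa using htr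
    refine FormalMultilinearSeries.le_radius_of_summable_norm _ ?_
    have := hsum.norm
    refine this.congr (fun n => ?_)
    rw [FormalMultilinearSeries.ofScalars_norm]
    simp [norm_mul, _root_.abs_of_nonneg t.2]
  · intro y hy
    simp only [EMetric.mem_ball, edist_zero_right] at hy
    have hy' : ‖y‖ < r := by
      have : ENNReal.ofReal ‖y‖ < ENNReal.ofReal r := by rwa [ofReal_norm]
      exact (ENNReal.ofReal_lt_ofReal_iff hr).mp this
    simpa [myOfScalars_coeff, FormalMultilinearSeries.ofScalars_apply_eq, smul_eq_mul,
      mul_comm] using h y hy'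

lemma my_coeff_eq {F : ℂ → ℂ} {p : FormalMultilinearSeries ℂ ℂ ℂ} {x : ℂ}
    (hp : HasFPowerSeriesAt F p x) (n : ℕ) :
    p.coeff n = iteratedDeriv n F x / (n.factorial : ℂ) := by
  obtain ⟨r, hr⟩ := hp
  have h := hr.factorial_smul (1 : ℂ) n
  rw [iteratedDeriv_eq_iteratedFDeriv, ← h, FormalMultilinearSeries.coeff, nsmul_eq_mul]
  have : (n.factorial : ℂ) ≠ 0 := by exact_mod_cast Nat.factorial_ne_zero n
  field_simp
  rfl

lemma my_comp_coeff (q p : FormalMultilinearSeries ℂ ℂ ℂ) (n : ℕ) :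
    (q.comp p).coeff n =
      ∑ c : Composition n, q.coeff c.length * ∏ i, p.coeff (c.blocksFun i) := by
  rw [FormalMultilinearSeries.coeff]
  show (∑ c : Composition n, q.compAlongComposition p c) (fun _ => 1) = _
  rw [ContinuousMultilinearMap.sum_apply]
  refine Finset.sum_congr rfl (fun c _ => ?_)
  rw [FormalMultilinearSeries.compAlongComposition_apply]
  have : p.applyComposition c (fun _ => (1:ℂ)) =
      fun i => (p.coeff (c.blocksFun i)) • (1 : ℂ) := by
    funext i
    simp only [smul_eq_mul, mul_one]
    rfl
  rw [this, ContinuousMultilinearMap.map_smul_univ, smul_eq_mul, mul_comm]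
  rfl
open intervalIntegral Real
lemma my_key {f F : ℂ → ℂ} (hfa : AnalyticAt ℂ f 0) (hf0 : f 0 = 0) (hfd0 : deriv f 0 = 1)
    (hfda : AnalyticAt ℂ (deriv f) 0)
    (hFf : ∀ᶠ z in nhds (0:ℂ), F (f z) = z)
    {c : ℕ → ℂ} {r : ℝ} (hr : 0 < r)
    (hsum : ∀ w : ℂ, ‖w‖ < r → HasSum (fun n : ℕ => c n * w ^ n) (F w))
    {pΦ : FormalMultilinearSeries ℂ ℂ ℂ}
    (hpΦ : HasFPowerSeriesAt (fun z => (deriv f z)⁻¹) pΦ 0) (n : ℕ) :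
    (n + 1 : ℂ) * c (n+1) =
      ∑ co : Composition n, pΦ.coeff co.length * ∏ i, c (co.blocksFun i) := by
  have hpF := my_hasFPowerSeriesAt hr hsum
  have hF0 : F 0 = 0 := by have := hFf.self_of_nhds; rwa [hf0] at this
  -- strict derivative of f at 0
  obtain ⟨pf, hpf⟩ := hfa
  have hs : HasStrictDerivAt f 1 0 := by
    have := hpf.hasStrictDerivAt
    rwa [← hpf.deriv, hfd0] at this
  have hE := hs.hasStrictFDerivAt_equiv one_ne_zero
  have hleft := hE.localInverse_unique hFf
  have hright := hE.eventually_right_inverse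
  rw [hf0] at hleft hright
  have hfF : ∀ᶠ w in nhds (0:ℂ), f (F w) = w := by
    filter_upwards [hleft, hright] with w h1 h2
    rw [h1]; exact h2
  -- analyticity of F near 0
  have hFan : AnalyticAt ℂ F 0 := hpF.analyticAt
  -- the set where f is nice
  have hTd : ∀ᶠ z in nhds (0:ℂ), deriv f z ≠ 0 := by
    have hc : ContinuousAt (deriv f) 0 := hfda.continuousAt
    have : ∀ᶠ z in nhds (0:ℂ), deriv f z ∈ {w : ℂ | w ≠ 0} := by
      refine hc.preimage_mem_nhds ?_
      rw [hfd0]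
      exact isOpen_ne.mem_nhds one_ne_zero
    exact this
  have hT : ∀ᶠ z in nhds (0:ℂ), AnalyticAt ℂ f z ∧ deriv f z ≠ 0 :=
    (hpf.analyticAt.eventually_analyticAt).and hTd
  have hFT : ∀ᶠ w in nhds (0:ℂ), AnalyticAt ℂ f (F w) ∧ deriv f (F w) ≠ 0 := by
    have : ContinuousAt F 0 := hFan.continuousAt
    have := this.preimage_mem_nhds (by rwa [hF0] : {z | AnalyticAt ℂ f z ∧ deriv f z ≠ 0} ∈ nhds (F 0))
    exact this
  have hODE : ∀ᶠ w in nhds (0:ℂ), deriv F w = (deriv f (F w))⁻¹ := by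
    filter_upwards [hfF.eventually_nhds, hFan.eventually_analyticAt, hFT] with w h1 h2 h3
    exact (HasDerivAt.of_local_left_inverse h2.continuousAt
      h3.1.differentiableAt.hasDerivAt h3.2 h1).deriv
  -- power series of deriv F at 0
  have hcomp : HasFPowerSeriesAt ((fun z => (deriv f z)⁻¹) ∘ F)
      (pΦ.comp (FormalMultilinearSeries.ofScalars ℂ c)) 0 := by
    refine HasFPowerSeriesAt.comp ?_ hpF
    rwa [hF0]
  have hpD : HasFPowerSeriesAt (deriv F)
      (pΦ.comp (FormalMultilinearSeries.ofScalars ℂ c)) 0 :=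
    hcomp.congr (by filter_upwards [hODE] with w h; exact h.symm)
  have e1 := my_coeff_eq hpD n
  have e2 := my_coeff_eq hpF (n+1)
  rw [myOfScalars_coeff] at e2
  have e3 := my_comp_coeff pΦ (FormalMultilinearSeries.ofScalars ℂ c) n
  simp only [myOfScalars_coeff] at e3
  rw [← e3, e1, ← iteratedDeriv_succ', e2]
  have h1 : ((n+1).factorial : ℂ) ≠ 0 := by exact_mod_cast Nat.factorial_ne_zero _
  have h2 : ((n).factorial : ℂ) ≠ 0 := by exact_mod_cast Nat.factorial_ne_zero _
  have hn1 : ((n:ℂ)+1) ≠ 0 := Nat.cast_add_one_ne_zero n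
  rw [Nat.factorial_succ]
  push_cast
  rw [← div_div, ← mul_div_assoc, ← mul_div_assoc, mul_div_cancel_left₀ _ hn1]


lemma my_intervalIntegral_conj {f : ℝ → ℂ} {a b : ℝ} :
    ∫ x in a..b, (starRingEnd ℂ) (f x) = (starRingEnd ℂ) (∫ x in a..b, f x) := by
  rw [intervalIntegral, intervalIntegral, map_sub, integral_conj, integral_conj]

lemma my_caratheodory_step (B : ℝ) (Φ : ℂ → ℂ)
    (hΦ : AnalyticOnNhd ℂ Φ (ball (0:ℂ) 1)) (hΦ0 : Φ 0 = 1)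
    (hre : ∀ z ∈ ball (0:ℂ) 1, (1 + B)/2 ≤ (Φ z).re)
    (p : FormalMultilinearSeries ℂ ℂ ℂ) (hp : HasFPowerSeriesAt Φ p 0) (k : ℕ) (hk : 1 ≤ k)
    (r : ℝ) (hr0 : 0 < r) (hr1 : r < 1) :
    ‖p.coeff k‖ * r ^ k ≤ 1 - B := by
  set z : ℝ → ℂ := fun θ => circleMap 0 r θ with hz
  have hznorm : ∀ θ, ‖z θ‖ = r := by
    intro θ; rw [hz]; simp [norm_circleMap_zero, abs_of_pos hr0]
  have hzball : ∀ θ, z θ ∈ ball (0:ℂ) 1 := by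
    intro θ; simp only [mem_ball, dist_zero_right]
    rw [hznorm]; exact hr1
  have hzne : ∀ θ, z θ ≠ 0 := by
    intro θ h
    have := hznorm θ; rw [h] at this; simp at this; linarith
  -- Cauchy power series on the closed ball of radius r
  have hsub : closedBall (0:ℂ) r ⊆ ball (0:ℂ) 1 :=
    closedBall_subset_ball hr1
  set r' : NNReal := ⟨r, hr0.le⟩ with hr'
  have hrr : (r' : ℝ) = r := rfl
  have hd : DifferentiableOn ℂ Φ (closedBall (0:ℂ) r') := by
    intro x hx
    exact ((hΦ x (hsub (by rwa [hrr] at hx))).differentiableAt).differentiableWithinAt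
  have hball := hd.hasFPowerSeriesOnBall (show 0 < r' from hr0)
  have huniq : p = cauchyPowerSeries Φ 0 r := by
    have := hp.eq_formalMultilinearSeries hball.hasFPowerSeriesAt
    rwa [hrr] at this
  have coeffInt : ∀ m : ℕ, p.coeff m =
      (2*π*Complex.I:ℂ)⁻¹ • ∫ θ in (0:ℝ)..(2*π), Complex.I * ((z θ)⁻¹^m * Φ (z θ)) := by
    intro m
    have h1 : p.coeff m = cauchyPowerSeries Φ 0 r m (fun _ => 1) := by
      rw [huniq]; rfl
    rw [cauchyPowerSeries_apply] at h1
    rw [circleIntegral] at h1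
    simp only [deriv_circleMap, sub_zero, smul_eq_mul, one_div] at h1
    rw [h1]
    congr 1
    refine intervalIntegral.integral_congr (fun θ _ => ?_)
    have := hzne θ
    simp only [hz] at this ⊢
    field_simp
  have htwopi : (2*π:ℂ) ≠ 0 := by
    simp [Complex.ext_iff, pi_ne_zero]
  have J : ∀ m : ℕ, (∫ θ in (0:ℝ)..(2*π), (z θ)⁻¹^m * Φ (z θ)) = (2*π:ℂ) * p.coeff m := by
    intro m
    have h := coeffInt m
    rw [intervalIntegral.integral_const_mul] at h
    rw [h, smul_eq_mul]
    have hI : (Complex.I) ≠ 0 := Complex.I_ne_zero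
    field_simp
  -- continuity facts
  have hcont_z : Continuous z := continuous_circleMap 0 r
  have hΦcont : ContinuousOn Φ (ball (0:ℂ) 1) :=
    fun x hx => (hΦ x hx).continuousAt.continuousWithinAt
  have hcont_u : Continuous (fun θ => Φ (z θ)) :=
    hΦcont.comp_continuous hcont_z hzball
  have hcont_zinv : ∀ m : ℕ, Continuous (fun θ => (z θ)⁻¹^m) :=
    fun m => (hcont_z.inv₀ hzne).pow m
  have hcont_cu : Continuous (fun θ => (starRingEnd ℂ) (Φ (z θ))) :=
    Complex.continuous_conj.comp hcont_u
  -- Cauchy-Goursat: ∫ z^k Φ = 0 and ∫ z^k = 0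
  have goursat : ∀ Ψ : ℂ → ℂ, ContinuousOn Ψ (closedBall (0:ℂ) r) →
      (∀ x ∈ ball (0:ℂ) r, DifferentiableAt ℂ Ψ x) →
      (∫ θ in (0:ℝ)..(2*π), z θ * Ψ (z θ)) = 0 := by
    intro Ψ hc hdiff
    have h0 := circleIntegral_eq_zero_of_differentiable_on_off_countable hr0.le
      Set.countable_empty hc (fun x hx => hdiff x hx.1)
    rw [circleIntegral] at h0
    simp only [deriv_circleMap, smul_eq_mul] at h0
    have : (∫ θ in (0:ℝ)..(2*π), Complex.I * (z θ * Ψ (z θ))) = 0 := by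
      rw [← h0]
      refine intervalIntegral.integral_congr (fun θ _ => ?_)
      ring
    rw [intervalIntegral.integral_const_mul] at this
    rcases mul_eq_zero.mp this with h | h
    · exact absurd h Complex.I_ne_zero
    · exact h
  have hK : (∫ θ in (0:ℝ)..(2*π), (z θ)^k * Φ (z θ)) = 0 := by
    have := goursat (fun w => w^(k-1) * Φ w)
      (((continuousOn_id.pow _)).mul (hΦcont.mono hsub))
      (fun x hx => ((differentiableAt_id.pow _)).mul
        ((hΦ x (hsub (ball_subset_closedBall hx))).differentiableAt))
    rw [← this]
    refine intervalIntegral.integral_congr (fun θ _ => ?_)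
    rw [← mul_assoc, ← pow_succ']
    congr 2
    omega
  have hK0 : (∫ θ in (0:ℝ)..(2*π), (z θ)^k) = 0 := by
    have := goursat (fun w => w^(k-1))
      ((continuousOn_id.pow _))
      (fun x hx => (differentiableAt_id.pow _))
    rw [← this]
    refine intervalIntegral.integral_congr (fun θ _ => ?_)
    rw [← pow_succ']
    congr 1
    omega
  -- conjugated versions
  have hconjz : ∀ θ, (starRingEnd ℂ) (z θ) = (r^2 : ℝ) * (z θ)⁻¹ := by
    intro θ
    have h1 : z θ * (starRingEnd ℂ) (z θ) = ((r^2 : ℝ) : ℂ) := by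
      rw [Complex.mul_conj]
      norm_cast
      rw [Complex.normSq_eq_norm_sq, hznorm]
    field_simp [hzne θ]
    push_cast
    push_cast at h1
    linear_combination h1
  have hC : (∫ θ in (0:ℝ)..(2*π), (z θ)⁻¹^k * (starRingEnd ℂ) (Φ (z θ))) = 0 := by
    have h1 : (∫ θ in (0:ℝ)..(2*π), (starRingEnd ℂ) ((z θ)^k * Φ (z θ))) = 0 := by
      rw [my_intervalIntegral_conj, hK, map_zero]
    have h2 : (∫ θ in (0:ℝ)..(2*π), ((r^(2*k):ℝ):ℂ) * ((z θ)⁻¹^k * (starRingEnd ℂ) (Φ (z θ)))) = 0 := by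
      rw [← h1]
      refine intervalIntegral.integral_congr (fun θ _ => ?_)
      simp only [map_mul, map_pow, hconjz θ]
      rw [mul_pow]
      push_cast
      rw [pow_mul]
      ring
    rw [intervalIntegral.integral_const_mul] at h2
    rcases mul_eq_zero.mp h2 with h | h
    · exfalso
      have : (r : ℝ)^(2*k) ≠ 0 := pow_ne_zero _ hr0.ne'
      exact this (by exact_mod_cast h)
    · exact h
  have hC0 : (∫ θ in (0:ℝ)..(2*π), (z θ)⁻¹^k) = 0 := by
    have h1 : (∫ θ in (0:ℝ)..(2*π), (starRingEnd ℂ) ((z θ)^k)) = 0 := by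
      rw [my_intervalIntegral_conj, hK0, map_zero]
    have h2 : (∫ θ in (0:ℝ)..(2*π), ((r^(2*k):ℝ):ℂ) * (z θ)⁻¹^k) = 0 := by
      rw [← h1]
      refine intervalIntegral.integral_congr (fun θ _ => ?_)
      simp only [map_pow, hconjz θ]
      rw [mul_pow]
      push_cast
      try rw [pow_mul]
      try ring
    rw [intervalIntegral.integral_const_mul] at h2
    rcases mul_eq_zero.mp h2 with h | h
    · exfalso
      have : (r : ℝ)^(2*k) ≠ 0 := pow_ne_zero _ hr0.ne'
      exact this (by exact_mod_cast h)
    · exact h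
  set V : ℝ → ℝ := fun θ => 2*(Φ (z θ)).re - (1+B) with hV
  have hVnonneg : ∀ θ, 0 ≤ V θ := by
    intro θ
    have := hre (z θ) (hzball θ)
    simp only [hV]
    linarith
  have hVc : ∀ θ, ((V θ : ℝ) : ℂ) = Φ (z θ) + (starRingEnd ℂ) (Φ (z θ)) - ((1+B:ℝ):ℂ) := by
    intro θ
    rw [Complex.add_conj]
    simp only [hV]
    push_cast
    ring
  have i1 : IntervalIntegrable (fun θ => (z θ)⁻¹^k * Φ (z θ)) MeasureTheory.volume 0 (2*π) :=
    ((hcont_zinv k).mul hcont_u).intervalIntegrable _ _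
  have i2 : IntervalIntegrable (fun θ => (z θ)⁻¹^k * (starRingEnd ℂ) (Φ (z θ)))
      MeasureTheory.volume 0 (2*π) :=
    ((hcont_zinv k).mul hcont_cu).intervalIntegrable _ _
  have i3 : IntervalIntegrable (fun θ => ((1+B:ℝ):ℂ) * (z θ)⁻¹^k) MeasureTheory.volume 0 (2*π) :=
    (continuous_const.mul (hcont_zinv k)).intervalIntegrable _ _
  have hmain : (∫ θ in (0:ℝ)..(2*π), (z θ)⁻¹^k * ((V θ : ℝ) : ℂ)) = 2*π*p.coeff k := by
    have heq : (fun θ => (z θ)⁻¹^k * ((V θ:ℝ):ℂ)) = fun θ =>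
        ((z θ)⁻¹^k * Φ (z θ) + (z θ)⁻¹^k * (starRingEnd ℂ) (Φ (z θ)))
          - ((1+B:ℝ):ℂ) * (z θ)⁻¹^k := by
      funext θ; rw [hVc θ]; ring
    rw [heq, intervalIntegral.integral_sub (i1.add i2) i3,
      intervalIntegral.integral_add i1 i2,
      J k, hC, intervalIntegral.integral_const_mul, hC0]
    ring
  have hnorm : ∀ θ, ‖(z θ)⁻¹^k * ((V θ : ℝ):ℂ)‖ = (r⁻¹)^k * V θ := by
    intro θ
    rw [norm_mul, norm_pow, norm_inv]
    rw [hznorm]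
    rw [Complex.norm_real, Real.norm_eq_abs, _root_.abs_of_nonneg (hVnonneg θ)]
  have hc0 : p.coeff 0 = 1 := by
    have := hp.coeff_zero (fun _ => 1)
    rw [hΦ0] at this
    exact this
  have hVint : (∫ θ in (0:ℝ)..(2*π), V θ) = 2*π*(1-B) := by
    have hcast : ((∫ θ in (0:ℝ)..(2*π), V θ : ℝ) : ℂ) = ∫ θ in (0:ℝ)..(2*π), ((V θ:ℝ):ℂ) :=
      (RCLike.intervalIntegral_ofReal).symm
    have hu : (∫ θ in (0:ℝ)..(2*π), Φ (z θ)) = 2*π := by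
      have := J 0
      simp only [pow_zero, one_mul] at this
      rw [this, hc0, mul_one]
    have hcu : (∫ θ in (0:ℝ)..(2*π), (starRingEnd ℂ) (Φ (z θ))) = 2*π := by
      rw [my_intervalIntegral_conj, hu]
      simp [Complex.ext_iff]
    have h2 : (∫ θ in (0:ℝ)..(2*π), ((V θ:ℝ):ℂ)) = 2*π*((1:ℂ)-B) := by
      have heq : (fun θ => ((V θ:ℝ):ℂ)) = fun θ =>
          (Φ (z θ) + (starRingEnd ℂ) (Φ (z θ))) - ((1+B:ℝ):ℂ) := funext hVc
      rw [heq, intervalIntegral.integral_sub (f := fun θ => Φ (z θ) + (starRingEnd ℂ) (Φ (z θ)))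
        ((hcont_u.add hcont_cu).intervalIntegrable _ _)
        ((continuous_const (y := ((1+B:ℝ):ℂ))).intervalIntegrable _ _),
        intervalIntegral.integral_add (hcont_u.intervalIntegrable _ _)
          (hcont_cu.intervalIntegrable _ _),
        hu, hcu, intervalIntegral.integral_const, sub_zero, Complex.real_smul]
      push_cast
      ring
    rw [h2] at hcast
    have : ((∫ θ in (0:ℝ)..(2*π), V θ : ℝ) : ℂ) = (((2*π*(1-B) : ℝ)) : ℂ) := by
      rw [hcast]; push_cast; ring
    exact_mod_cast this
  have hb : ‖(2*π*p.coeff k : ℂ)‖ ≤ (r⁻¹)^k * (2*π*(1-B)) := by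
    rw [← hmain]
    calc ‖∫ θ in (0:ℝ)..(2*π), (z θ)⁻¹^k * ((V θ:ℝ):ℂ)‖
        ≤ ∫ θ in (0:ℝ)..(2*π), ‖(z θ)⁻¹^k * ((V θ:ℝ):ℂ)‖ :=
          intervalIntegral.norm_integral_le_integral_norm (by positivity)
      _ = ∫ θ in (0:ℝ)..(2*π), (r⁻¹)^k * V θ :=
          intervalIntegral.integral_congr (fun θ _ => hnorm θ)
      _ = (r⁻¹)^k * ∫ θ in (0:ℝ)..(2*π), V θ := intervalIntegral.integral_const_mul _ _
      _ = (r⁻¹)^k * (2*π*(1-B)) := by rw [hVint]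
  have hnormval : ‖(2*π*p.coeff k : ℂ)‖ = 2*π*‖p.coeff k‖ := by
    rw [norm_mul]
    congr 1
    simp [Complex.norm_real, abs_of_pos pi_pos]
  rw [hnormval] at hb
  have h3 : ‖p.coeff k‖ ≤ (r⁻¹)^k * (1-B) := by
    have hpi : (0:ℝ) < 2*π := by positivity
    have hrw : (r⁻¹)^k * (2*π*(1-B)) = 2*π*((r⁻¹)^k*(1-B)) := by ring
    rw [hrw] at hb
    exact le_of_mul_le_mul_left hb hpi
  have hrk : (0:ℝ) < r^k := pow_pos hr0 k
  have hinv : (r⁻¹)^k * r^k = 1 := by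
    rw [← mul_pow, inv_mul_cancel₀ hr0.ne', one_pow]
  calc ‖p.coeff k‖ * r^k ≤ ((r⁻¹)^k * (1-B)) * r^k :=
        mul_le_mul_of_nonneg_right h3 hrk.le
    _ = 1 - B := by rw [mul_comm ((r⁻¹)^k) (1-B), mul_assoc, hinv, mul_one]

lemma my_caratheodory (B : ℝ) (Φ : ℂ → ℂ)
    (hΦ : AnalyticOnNhd ℂ Φ (ball (0:ℂ) 1)) (hΦ0 : Φ 0 = 1)
    (hre : ∀ z ∈ ball (0:ℂ) 1, (1 + B)/2 ≤ (Φ z).re)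
    (p : FormalMultilinearSeries ℂ ℂ ℂ) (hp : HasFPowerSeriesAt Φ p 0) (k : ℕ) (hk : 1 ≤ k) :
    ‖p.coeff k‖ ≤ 1 - B := by
  have hev : ∀ᶠ r in nhdsWithin (1:ℝ) (Set.Iio 1), ‖p.coeff k‖ * r^k ≤ 1 - B := by
    filter_upwards [Ioo_mem_nhdsLT_of_mem (Set.mem_Ioc.mpr ⟨one_pos, le_rfl⟩)] with r hr
    exact my_caratheodory_step B Φ hΦ hΦ0 hre p hp k hk r hr.1 hr.2
  have htend : Filter.Tendsto (fun r : ℝ => ‖p.coeff k‖ * r^k)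
      (nhdsWithin 1 (Set.Iio 1)) (nhds (‖p.coeff k‖)) := by
    have hc : Continuous fun r : ℝ => ‖p.coeff k‖ * r^k := by continuity
    have h := (hc.tendsto 1).mono_left (nhdsWithin_le_nhds (s := Set.Iio 1))
    simpa using h
  exact le_of_tendsto htend hev


/-- Inverse coefficient domination for `𝔦[1,B]`, `-1 ≤ B < 1`: with `g` the normalized
primitive of `(1-z)/(1-Bz)` on the disc, `f⁻¹(w) = w + ∑_{n≥2} γ_n wⁿ` and
`g⁻¹(w) = w + ∑_{n≥2} A_n wⁿ`, one has `|γ_n| ≤ A_n` for every `n ≥ 2`. -/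
theorem inverse_coeff_domination_I (B : ℝ) (hB₁ : -1 ≤ B) (hB₂ : B < 1)
    (f : ℂ → ℂ) (hf : MemI 1 B f)
    (g : ℂ → ℂ) (hg : AnalyticOnNhd ℂ g (ball (0 : ℂ) 1)) (hg0 : g 0 = 0)
    (hg' : ∀ z ∈ ball (0 : ℂ) 1, deriv g z = (1 - z) / (1 - (B : ℂ) * z))
    (F : ℂ → ℂ) (hFf : ∀ᶠ z in nhds (0 : ℂ), F (f z) = z)
    (γ : ℕ → ℂ) (hγ0 : γ 0 = 0) (hγ1 : γ 1 = 1)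
    (hF : ∃ r > 0, ∀ w : ℂ, ‖w‖ < r → HasSum (fun n : ℕ => γ n * w ^ n) (F w))
    (G : ℂ → ℂ) (hGg : ∀ᶠ z in nhds (0 : ℂ), G (g z) = z)
    (a : ℕ → ℝ) (ha0 : a 0 = 0) (ha1 : a 1 = 1)
    (hG : ∃ r > 0, ∀ w : ℂ, ‖w‖ < r → HasSum (fun n : ℕ => (a n : ℂ) * w ^ n) (G w))
    (n : ℕ) (hn : 2 ≤ n) :
    ‖γ n‖ ≤ a n := by
  have h0mem : (0:ℂ) ∈ ball (0:ℂ) 1 := by simp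
  have hBabs : |B| ≤ 1 := abs_le.mpr ⟨hB₁, hB₂.le⟩
  obtain ⟨hfa, hinj, hf0, hfd1, hda, hd0, ω, hωa, hω0, hωlt, hωeq⟩ := hf
  -- basic facts about ω
  have hBω : ∀ z ∈ ball (0:ℂ) 1, ‖(B:ℂ) * ω z‖ < 1 := by
    intro z hz
    rw [norm_mul, Complex.norm_real, Real.norm_eq_abs]
    calc |B| * ‖ω z‖ ≤ 1 * ‖ω z‖ := by
          exact mul_le_mul_of_nonneg_right hBabs (norm_nonneg _)
      _ = ‖ω z‖ := one_mul _
      _ < 1 := hωlt z hz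
  have hωeq' : ∀ z ∈ ball (0:ℂ) 1,
      deriv f z = (1 + ω z) / (1 + (B:ℂ) * ω z) := by
    intro z hz
    have := hωeq z hz
    simpa using this
  have hdf_ne : ∀ z ∈ ball (0:ℂ) 1, deriv f z ≠ 0 := by
    intro z hz
    rw [hωeq' z hz]
    exact div_ne_zero (my_one_add_ne _ (hωlt z hz)) (my_one_add_ne _ (hBω z hz))
  -- Φ := 1 / f'
  set Φ : ℂ → ℂ := fun z => (deriv f z)⁻¹ with hΦdef
  have hΦa : AnalyticOnNhd ℂ Φ (ball (0:ℂ) 1) := hda.inv hdf_ne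
  have hΦ0 : Φ 0 = 1 := by rw [hΦdef]; simp [hfd1]
  have hΦform : ∀ z ∈ ball (0:ℂ) 1,
      Φ z = (B:ℂ) + ((1-B:ℝ):ℂ) * (1 + ω z)⁻¹ := by
    intro z hz
    rw [hΦdef]
    simp only
    rw [hωeq' z hz]
    have h1 := my_one_add_ne _ (hωlt z hz)
    have h2 := my_one_add_ne _ (hBω z hz)
    field_simp
    push_cast
    ring
  have hre : ∀ z ∈ ball (0:ℂ) 1, (1 + B)/2 ≤ (Φ z).re := by
    intro z hz
    rw [hΦform z hz]
    have h1 := my_re_inv (ω z) (hωlt z hz)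
    rw [Complex.add_re, Complex.ofReal_re, Complex.re_ofReal_mul]
    nlinarith [hB₂]
  obtain ⟨pΦ, hpΦ⟩ := hΦa 0 h0mem
  -- ψ coefficients
  set ψ : ℕ → ℝ := fun j => if j = 0 then 1 else 1 - B with hψdef
  have hψ0 : ψ 0 = 1 := rfl
  have hψpos : ∀ j, 0 ≤ ψ j := by
    intro j
    rw [hψdef]
    by_cases h : j = 0 <;> simp [h] <;> linarith
  have hφbound : ∀ j, ‖pΦ.coeff j‖ ≤ ψ j := by
    intro j
    match j with
    | 0 =>
      have : pΦ.coeff 0 = 1 := by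
        have := hpΦ.coeff_zero (fun _ => 1)
        rw [hΦ0] at this
        exact this
      rw [this, hψ0]
      simp
    | (j+1) =>
      have h := my_caratheodory B Φ hΦa hΦ0 hre pΦ hpΦ (j+1) (Nat.succ_le_succ (Nat.zero_le _))
      simpa [hψdef] using h
  -- recurrence for γ
  obtain ⟨r, hr, hsum⟩ := hF
  have hrecF := my_key (hfa 0 h0mem) hf0 hfd1 (hda 0 h0mem) hFf hr hsum hpΦ
  -- series for Ψ = 1/g'
  have hgd1 : deriv g 0 = 1 := by rw [hg' 0 h0mem]; simp
  have hWsum : ∀ w : ℂ, ‖w‖ < 1 →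
      HasSum (fun j : ℕ => ((ψ j : ℝ):ℂ) * w ^ j) ((1 - (B:ℂ)*w)/(1 - w)) := by
    intro w hw
    have h1 : HasSum (fun j : ℕ => ((1-B:ℝ):ℂ) * w ^ j) (((1-B:ℝ):ℂ) * (1-w)⁻¹) :=
      (hasSum_geometric_of_norm_lt_one hw).mul_left _
    have h2 : HasSum (fun j : ℕ => if j = 0 then (B:ℂ) else 0) (B:ℂ) := hasSum_ite_eq 0 _
    have h3 := h1.add h2
    have he : (fun j : ℕ => ((1-B:ℝ):ℂ) * w ^ j + if j = 0 then (B:ℂ) else 0)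
        = fun j : ℕ => ((ψ j : ℝ):ℂ) * w ^ j := by
      funext j
      by_cases h : j = 0 <;> simp [h, hψdef] <;> push_cast <;> ring
    rw [he] at h3
    have hv : ((1-B:ℝ):ℂ) * (1-w)⁻¹ + (B:ℂ) = (1 - (B:ℂ)*w)/(1 - w) := by
      have hne := my_one_sub_ne w hw
      field_simp
      push_cast
      ring
    rwa [hv] at h3
  have hW := my_hasFPowerSeriesAt one_pos hWsum
  have hgball : ball (0:ℂ) 1 ∈ nhds (0:ℂ) := isOpen_ball.mem_nhds h0mem
  have hΨev : (fun w : ℂ => (1 - (B:ℂ)*w)/(1 - w)) =ᶠ[nhds (0:ℂ)]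
      (fun z => (deriv g z)⁻¹) := by
    filter_upwards [hgball] with z hz
    rw [hg' z hz, inv_div]
  have hpΨ : HasFPowerSeriesAt (fun z => (deriv g z)⁻¹)
      (FormalMultilinearSeries.ofScalars ℂ (fun j => ((ψ j : ℝ):ℂ))) 0 := hW.congr hΨev
  -- deriv g analytic at 0
  have hgda : AnalyticAt ℂ (deriv g) 0 := by
    have hrat : AnalyticAt ℂ (fun z : ℂ => (1 - z)/(1 - (B:ℂ)*z)) 0 := by
      apply AnalyticAt.div
      · exact analyticAt_const.sub analyticAt_id
      · exact analyticAt_const.sub (analyticAt_const.mul analyticAt_id)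
      · simp
    refine hrat.congr ?_
    filter_upwards [hgball] with z hz
    exact (hg' z hz).symm
  obtain ⟨r₂, hr₂, hsum₂⟩ := hG
  have hrecG := my_key (hg 0 h0mem) hg0 hgd1 hgda hGg hr₂ hsum₂ hpΨ
  have hrecG' : ∀ m : ℕ, ((m:ℝ) + 1) * a (m+1) =
      ∑ co : Composition m, ψ co.length * ∏ i, a (co.blocksFun i) := by
    intro m
    have h := hrecG m
    simp only [myOfScalars_coeff] at h
    have : ((((m:ℝ)+1) * a (m+1) : ℝ) : ℂ)
        = ((∑ co : Composition m, ψ co.length * ∏ i, a (co.blocksFun i) : ℝ) : ℂ) := by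
      push_cast
      push_cast at h
      convert h using 2
    exact_mod_cast this
  -- main induction
  have main : ∀ m : ℕ, ‖γ m‖ ≤ a m ∧ 0 ≤ a m := by
    intro m
    induction m using Nat.strong_induction_on with
    | _ m ih =>
      match m with
      | 0 => constructor <;> simp [hγ0, ha0]
      | 1 => constructor <;> simp [hγ1, ha1]
      | (m+2) =>
        have hrec1' : ((m:ℂ) + 1 + 1) * γ (m+2)
            = ∑ co : Composition (m+1), pΦ.coeff co.length * ∏ i, γ (co.blocksFun i) := by
          have h := hrecF (m+1)
          push_cast at h
          exact h
        have hrec2' : ((m:ℝ) + 1 + 1) * a (m+2)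
            = ∑ co : Composition (m+1), ψ co.length * ∏ i, a (co.blocksFun i) := by
          have h := hrecG' (m+1)
          push_cast at h
          exact h
        have hterm : ∀ co : Composition (m+1),
            ‖pΦ.coeff co.length * ∏ i, γ (co.blocksFun i)‖
              ≤ ψ co.length * ∏ i, a (co.blocksFun i) := by
          intro co
          rw [norm_mul, norm_prod]
          have hblock : ∀ i : Fin co.length, co.blocksFun i < m + 2 :=
            fun i => Nat.lt_succ_of_le (co.blocksFun_le i)
          refine mul_le_mul (hφbound _) ?_ ?_ (hψpos _)
          · exact Finset.prod_le_prod (fun i _ => norm_nonneg _)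
              (fun i _ => (ih _ (hblock i)).1)
          · exact Finset.prod_nonneg (fun i _ => norm_nonneg _)
        have hsumb : ‖∑ co : Composition (m+1), pΦ.coeff co.length * ∏ i, γ (co.blocksFun i)‖
            ≤ ∑ co : Composition (m+1), ψ co.length * ∏ i, a (co.blocksFun i) :=
          (norm_sum_le _ _).trans (Finset.sum_le_sum (fun co _ => hterm co))
        have hs : (0:ℝ) ≤ ∑ co : Composition (m+1), ψ co.length * ∏ i, a (co.blocksFun i) := by
          refine Finset.sum_nonneg (fun co _ => mul_nonneg (hψpos _)
            (Finset.prod_nonneg (fun i _ => ?_)))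
          exact (ih _ (Nat.lt_succ_of_le (co.blocksFun_le i))).2
        have hm2 : (0:ℝ) < (m:ℝ) + 1 + 1 := by positivity
        have hanonneg : 0 ≤ a (m+2) := by nlinarith [hs, hm2, hrec2']
        have hlhs : ‖((m:ℂ)+1+1) * γ (m+2)‖ = ((m:ℝ)+1+1) * ‖γ (m+2)‖ := by
          rw [norm_mul]
          congr 1
          have he : ((m:ℂ) + 1 + 1) = (((m:ℝ) + 1 + 1 : ℝ) : ℂ) := by push_cast; ring
          rw [he, Complex.norm_real, Real.norm_eq_abs, _root_.abs_of_pos hm2]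
        have hγb : ((m:ℝ)+1+1) * ‖γ (m+2)‖ ≤ ((m:ℝ)+1+1) * a (m+2) := by
          calc ((m:ℝ)+1+1) * ‖γ (m+2)‖ = ‖((m:ℂ)+1+1) * γ (m+2)‖ := hlhs.symm
            _ = ‖∑ co : Composition (m+1), pΦ.coeff co.length * ∏ i, γ (co.blocksFun i)‖ := by
                rw [hrec1']
            _ ≤ ∑ co : Composition (m+1), ψ co.length * ∏ i, a (co.blocksFun i) := hsumb
            _ = ((m:ℝ)+1+1) * a (m+2) := hrec2'.symm
        exact ⟨le_of_mul_le_mul_left hγb hm2, hanonneg⟩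
  exact (main n).1
end
end

section
/- Let -1 \le B < 1 and let g be the analytic function on \mathbb{D} with g(0) = 0 and g'(z) = (1-z)/(1-Bz), and let g^{-1}(w) = w + \sum_{n=2}^{\infty} A_n w^n be its analytic inverse near 0. Then A_n > 0 for all n \ge 2; moreover 2A_2 = 1 - B, 3A_3 = (1 - B + 2)A_2, and for n > 2, (n+1)A_{n+1} = (1 - B + n)A_n + \sum_{k=1}^{n-2} (k+1) A_{k+1} A_{n-k}. -/
open Complex Metric Finset

noncomputable section

open Filter FormalMultilinearSeries

private lemma mem_eball_iff' {ρ : NNReal} {y : ℂ} :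
    y ∈ Metric.eball (0 : ℂ) (ρ : ENNReal) ↔ ‖y‖ < ρ := by
  rw [Metric.emetric_ball_nnreal, mem_ball_zero_iff]

/-- From a pointwise `HasSum` representation on a ball, get a `HasFPowerSeriesOnBall`. -/
private lemma aux_onBall {c : ℕ → ℂ} {f : ℂ → ℂ} {ρ : NNReal} (hρ : 0 < ρ)
    (h : ∀ w : ℂ, ‖w‖ < ρ → HasSum (fun n => c n * w ^ n) (f w)) :
    HasFPowerSeriesOnBall f (ofScalars ℂ c) 0 ρ := by
  refine ⟨?_, by exact_mod_cast hρ, ?_⟩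
  · refine ENNReal.le_of_forall_nnreal_lt fun s hs => ?_
    have hs' : (s : ℝ) < ρ := by exact_mod_cast hs
    have h1 := (h (s : ℝ) (by simpa using hs')).summable
    have h2 : Tendsto (fun n => ‖c n * ((s : ℝ) : ℂ) ^ n‖) atTop (nhds 0) := by
      simpa using h1.tendsto_atTop_zero.norm
    apply (ofScalars ℂ c).le_radius_of_tendsto (l := 0)
    refine h2.congr fun n => ?_
    rw [norm_mul, norm_pow, ofScalars_norm]
    simp
  · intro y hy
    rw [mem_eball_iff'] at hy
    have := h y hy
    rw [zero_add]
    refine this.congr_fun fun n => ?_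
    rw [ofScalars_apply_eq, smul_eq_mul]

private lemma aux_summable {c : ℕ → ℂ} {f : ℂ → ℂ} {ρ : NNReal}
    (h : HasFPowerSeriesOnBall f (ofScalars ℂ c) 0 ρ) {w : ℂ} (hw : ‖w‖ < ρ) :
    Summable fun n => ‖c n * w ^ n‖ := by
  have h1 : (‖w‖₊ : ENNReal) < (ofScalars ℂ c).radius := by
    refine lt_of_lt_of_le ?_ h.r_le
    exact_mod_cast hw
  have h2 := (ofScalars ℂ c).summable_norm_mul_pow h1
  refine h2.congr fun n => ?_
  rw [ofScalars_norm, norm_mul, norm_pow]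
  simp

/-- Term-by-term derivative sums for a scalar power series. -/
private lemma aux_deriv_hasSum {c : ℕ → ℂ} {f : ℂ → ℂ} {ρ : NNReal}
    (h : HasFPowerSeriesOnBall f (ofScalars ℂ c) 0 ρ) {w : ℂ} (hw : ‖w‖ < ρ) :
    HasSum (fun n : ℕ => ((n : ℕ) + 1 : ℂ) * c (n + 1) * w ^ n) (deriv f w) := by
  have hf := h.fderiv
  have hs := hf.hasSum (mem_eball_iff'.mpr hw)
  rw [zero_add] at hs
  have hs2 := hs.mapL (ContinuousLinearMap.apply ℂ ℂ (1 : ℂ))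
  have key : ∀ n : ℕ, ((ofScalars ℂ c).derivSeries n fun _ => w) 1
      = ((n : ℕ) + 1 : ℂ) * c (n + 1) * w ^ n := by
    intro n
    rcases eq_or_ne w 0 with rfl | hw0
    · rcases n with _ | n
      · have e : ((ofScalars ℂ c).derivSeries 0 fun _ => (0 : ℂ))
            = ((ofScalars ℂ c).derivSeries 0 fun _ => (1 : ℂ)) := by
          congr 1
          exact Subsingleton.elim _ _
        rw [e, (ofScalars ℂ c).derivSeries_apply_diag 0 (1 : ℂ), ofScalars_apply_eq]
        simp
      · rw [ContinuousMultilinearMap.map_coord_zero _ (⟨0, Nat.succ_pos n⟩ : Fin (n + 1)) rfl]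
        simp
    · have lin : ((ofScalars ℂ c).derivSeries n fun _ => w) w
          = w • (((ofScalars ℂ c).derivSeries n fun _ => w) 1) := by
        have := ((ofScalars ℂ c).derivSeries n fun _ => w).map_smul w 1
        simpa using this
      have diag := (ofScalars ℂ c).derivSeries_apply_diag n w
      apply mul_left_cancel₀ hw0
      rw [← smul_eq_mul, ← lin, diag, ofScalars_apply_eq, nsmul_eq_mul, smul_eq_mul]
      push_cast
      ring
  have : deriv f w = (ContinuousLinearMap.apply ℂ ℂ (1 : ℂ)) (fderiv ℂ f w) := by
    simp [ContinuousLinearMap.apply_apply, fderiv_apply_one_eq_deriv]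
  rw [this]
  exact hs2.congr_fun fun n => (key n).symm

/-- Positivity and recurrence for the inverse coefficients of the normalized primitive
`g` of `(1-z)/(1-Bz)` on the unit disc, `-1 ≤ B < 1`: writing
`g⁻¹(w) = w + ∑_{n≥2} A_n wⁿ`, one has `A_n > 0` for all `n ≥ 2`, `2A₂ = 1-B`,
`3A₃ = (1-B+2)A₂`, and `(n+1)A_{n+1} = (1-B+n)A_n + ∑_{k=1}^{n-2}(k+1)A_{k+1}A_{n-k}`
for `n > 2`. -/
theorem inverse_coeff_recurrence (B : ℝ) (hB₁ : -1 ≤ B) (hB₂ : B < 1)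
    (g : ℂ → ℂ) (hg : AnalyticOnNhd ℂ g (ball (0 : ℂ) 1)) (hg0 : g 0 = 0)
    (hg' : ∀ z ∈ ball (0 : ℂ) 1, deriv g z = (1 - z) / (1 - (B : ℂ) * z))
    (G : ℂ → ℂ) (hGg : ∀ᶠ z in nhds (0 : ℂ), G (g z) = z)
    (a : ℕ → ℝ) (ha0 : a 0 = 0) (ha1 : a 1 = 1)
    (hG : ∃ r > 0, ∀ w : ℂ, ‖w‖ < r → HasSum (fun n : ℕ => (a n : ℂ) * w ^ n) (G w)) :
    (∀ n : ℕ, 2 ≤ n → 0 < a n) ∧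
      2 * a 2 = 1 - B ∧
      3 * a 3 = (1 - B + 2) * a 2 ∧
      ∀ n : ℕ, 2 < n →
        ((n : ℝ) + 1) * a (n + 1) = (1 - B + (n : ℝ)) * a n +
          ∑ k ∈ Finset.Icc 1 (n - 2), ((k : ℝ) + 1) * a (k + 1) * a (n - k) := by
  classical
  obtain ⟨r, hr0, hGsum⟩ := hG
  set c : ℕ → ℂ := fun n => ((a n : ℝ) : ℂ) with hc
  set ρ : NNReal := r.toNNReal with hρdef
  have hρ : 0 < ρ := Real.toNNReal_pos.mpr hr0
  have hρr : ∀ w : ℂ, ‖w‖ < ρ → ‖w‖ < r := fun w hw => by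
    rwa [hρdef, Real.coe_toNNReal r hr0.le] at hw
  have hp : HasFPowerSeriesOnBall G (ofScalars ℂ c) 0 ρ :=
    aux_onBall hρ fun w hw => hGsum w (hρr w hw)
  have hG0 : G 0 = 0 := by
    have h1 := hGsum 0 (by simpa using hr0)
    have h2 : HasSum (fun n : ℕ => c n * (0 : ℂ) ^ n) (c 0 * (0 : ℂ) ^ 0) :=
      hasSum_single (f := fun n : ℕ => c n * (0 : ℂ) ^ n) 0
        (fun b hb => by simp [zero_pow hb])
    have := h1.unique h2
    simp [hc, ha0] at this
    simpa [hc, ha0] using this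
  -- derivative series
  set d : ℕ → ℂ := fun n => ((n : ℕ) + 1 : ℂ) * c (n + 1) with hdd
  have hd : ∀ w : ℂ, ‖w‖ < ρ → HasSum (fun n => d n * w ^ n) (deriv G w) :=
    fun w hw => aux_deriv_hasSum hp hw
  have hq : HasFPowerSeriesOnBall (deriv G) (ofScalars ℂ d) 0 ρ := aux_onBall hρ hd
  -- local right inverse: g (G w) = w near 0
  have hball0 : (0 : ℂ) ∈ ball (0 : ℂ) 1 := by simp
  have hdg0 : deriv g 0 = 1 := by rw [hg' 0 hball0]; simp
  have hgsd : HasStrictDerivAt g 1 0 := by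
    have h1 := (hg 0 hball0).hasStrictFDerivAt
    have h2 := h1.hasStrictDerivAt
    rwa [fderiv_apply_one_eq_deriv, hdg0] at h2
  have hF := hgsd.hasStrictFDerivAt_equiv one_ne_zero
  have huniq := hF.localInverse_unique hGg
  have hrinv := hF.eventually_right_inverse
  rw [hg0] at huniq hrinv
  have key : ∀ᶠ w in nhds (0 : ℂ), g (G w) = w := by
    filter_upwards [huniq, hrinv] with w h1 h2
    rw [h1, h2]
  -- the ODE (1 - G) * G' = 1 - B * G near 0
  have hGcont : ContinuousAt G 0 := hp.analyticAt.continuousAt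
  have ev1 : ∀ᶠ w in nhds (0 : ℂ), G w ∈ ball (0 : ℂ) 1 := by
    have : G ⁻¹' (ball (0 : ℂ) 1) ∈ nhds (0 : ℂ) :=
      hGcont.preimage_mem_nhds (by rw [hG0]; exact ball_mem_nhds _ one_pos)
    exact this
  have ev2 : ∀ᶠ w in nhds (0 : ℂ), w ∈ Metric.eball (0 : ℂ) (ρ : ENNReal) :=
    EMetric.isOpen_ball.mem_nhds (EMetric.mem_ball_self (by exact_mod_cast hρ))
  have hden : ∀ z : ℂ, z ∈ ball (0 : ℂ) 1 → (1 : ℂ) - (B : ℂ) * z ≠ 0 := by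
    intro z hz h0
    rw [mem_ball_zero_iff] at hz
    have hB : ‖(B : ℂ)‖ ≤ 1 := by
      rw [Complex.norm_real, Real.norm_eq_abs]
      exact abs_le.mpr ⟨hB₁, hB₂.le⟩
    have h1 : (B : ℂ) * z = 1 := by linear_combination -h0
    have : ‖(B : ℂ) * z‖ < 1 := by
      rw [norm_mul]
      nlinarith [norm_nonneg ((B : ℂ)), norm_nonneg z]
    rw [h1] at this
    simp at this
  have ode : ∀ᶠ w in nhds (0 : ℂ),
      (1 - G w) * deriv G w = 1 - (B : ℂ) * G w := by
    filter_upwards [eventually_eventually_nhds.mpr key, ev1, ev2] with w hloc hb hw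
    have dG : DifferentiableAt ℂ G w :=
      (hp.differentiableOn w hw).differentiableAt (EMetric.isOpen_ball.mem_nhds hw)
    have dg : DifferentiableAt ℂ g (G w) := (hg _ hb).differentiableAt
    have hcomp : deriv (g ∘ G) w = deriv g (G w) * deriv G w := deriv_comp w dg dG
    have hEq : (fun x => g (G x)) =ᶠ[nhds w] (fun x => x) := hloc
    have hone : deriv (fun x => g (G x)) w = 1 := by rw [hEq.deriv_eq]; exact deriv_id w
    have h1 : deriv g (G w) * deriv G w = 1 := by
      rw [← hcomp]; exact hone
    rw [hg' (G w) hb] at h1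
    have h2 := hden (G w) hb
    have h2' : 1 - G w * (B : ℂ) ≠ 0 := by rwa [mul_comm] at h2
    field_simp at h1
    linear_combination h1
  -- power series of both sides
  set u : ℕ → ℂ := fun n => (if n = 0 then 1 else 0) - c n with hu_def
  set L : ℕ → ℂ := fun n => ∑ k ∈ range (n + 1), u k * d (n - k) with hL_def
  set R : ℕ → ℂ := fun n => (if n = 0 then 1 else 0) - (B : ℂ) * c n with hR_def
  have hone : ∀ w : ℂ, HasSum (fun n : ℕ => (if n = 0 then (1 : ℂ) else 0) * w ^ n) 1 := by
    intro w
    have he : (fun n : ℕ => (if n = 0 then (1 : ℂ) else 0) * w ^ n)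
        = fun n : ℕ => if n = 0 then 1 else 0 := by
      funext n
      rcases eq_or_ne n 0 with rfl | h
      · simp
      · simp [h]
    rw [he]
    exact hasSum_ite_eq 0 1
  have hu : ∀ w : ℂ, ‖w‖ < ρ → HasSum (fun n => u n * w ^ n) (1 - G w) := by
    intro w hw
    have := (hone w).sub (hGsum w (hρr w hw))
    refine this.congr_fun fun n => ?_
    rw [hu_def]
    ring
  have hRsum : ∀ w : ℂ, ‖w‖ < ρ → HasSum (fun n => R n * w ^ n) (1 - (B : ℂ) * G w) := by
    intro w hw
    have := (hone w).sub ((hGsum w (hρr w hw)).mul_left (B : ℂ))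
    refine this.congr_fun fun n => ?_
    rw [hR_def]
    ring
  have hLsum : ∀ w : ℂ, ‖w‖ < ρ → HasSum (fun n => L n * w ^ n)
      ((1 - G w) * deriv G w) := by
    intro w hw
    have sc : Summable fun n => ‖c n * w ^ n‖ := aux_summable hp hw
    have si : Summable fun n : ℕ => ‖(if n = 0 then (1 : ℂ) else 0) * w ^ n‖ := by
      apply summable_of_ne_finset_zero (s := {0})
      intro n hn
      simp only [Finset.mem_singleton] at hn
      simp [hn]
    have su : Summable fun n => ‖u n * w ^ n‖ := by
      refine Summable.of_nonneg_of_le (fun n => norm_nonneg _) (fun n => ?_) (si.add sc)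
      rw [hu_def]
      calc ‖((if n = 0 then (1 : ℂ) else 0) - c n) * w ^ n‖
          = ‖(if n = 0 then (1 : ℂ) else 0) * w ^ n - c n * w ^ n‖ := by ring_nf
        _ ≤ ‖(if n = 0 then (1 : ℂ) else 0) * w ^ n‖ + ‖c n * w ^ n‖ := norm_sub_le _ _
    have sv : Summable fun n => ‖d n * w ^ n‖ := aux_summable hq hw
    have H := hasSum_sum_range_mul_of_summable_norm su sv
    rw [(hu w hw).tsum_eq, (hd w hw).tsum_eq] at H
    refine H.congr_fun fun n => ?_
    rw [hL_def, Finset.sum_mul]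
    refine Finset.sum_congr rfl fun k hk => ?_
    have hk' : k ≤ n := Nat.lt_succ_iff.mp (Finset.mem_range.mp hk)
    rw [mul_mul_mul_comm, ← pow_add, Nat.add_sub_cancel' hk']
  -- uniqueness of coefficients
  have HL := aux_onBall hρ hLsum
  have HR := aux_onBall hρ hRsum
  have hEqS : ofScalars ℂ L = ofScalars ℂ R :=
    (HL.hasFPowerSeriesAt.congr ode).eq_formalMultilinearSeries HR.hasFPowerSeriesAt
  have hcoef : ∀ n : ℕ, L n = R n := by
    intro n
    have h1 := congrFun hEqS n
    have h2 : (ofScalars ℂ L n) (fun _ => (1 : ℂ)) = (ofScalars ℂ R n) (fun _ => (1 : ℂ)) := by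
      rw [h1]
    rw [ofScalars_apply_eq, ofScalars_apply_eq] at h2
    simpa using h2
  -- the real recurrence
  have hrec : ∀ n : ℕ, 1 ≤ n → ((n : ℝ) + 1) * a (n + 1) =
      (∑ k ∈ Finset.Icc 1 n, (((n - k : ℕ) : ℝ) + 1) * a k * a (n - k + 1)) - B * a n := by
    intro n hn
    have hC := hcoef n
    rw [hL_def, hR_def] at hC
    simp only [if_neg (by omega : ¬ n = 0)] at hC
    have hsplit : range (n + 1) = insert 0 (Finset.Icc 1 n) := by
      ext m
      simp only [Finset.mem_range, Finset.mem_insert, Finset.mem_Icc]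
      omega
    rw [hsplit, Finset.sum_insert (by simp)] at hC
    have hc0 : c 0 = 0 := by simp [hc, ha0]
    have hu0 : u 0 = 1 := by simp [hu_def, hc0]
    have e1 : ∑ k ∈ Finset.Icc 1 n, u k * d (n - k)
        = -∑ k ∈ Finset.Icc 1 n, (((n - k : ℕ) : ℂ) + 1) * c k * c (n - k + 1) := by
      rw [← Finset.sum_neg_distrib]
      refine Finset.sum_congr rfl fun k hk => ?_
      have hk1 : 1 ≤ k := (Finset.mem_Icc.mp hk).1
      rw [hu_def, hdd]
      simp only [if_neg (by omega : ¬ k = 0)]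
      ring
    rw [e1, hu0, hdd] at hC
    simp only [Nat.sub_zero, one_mul] at hC
    have hCC : ((n : ℂ) + 1) * c (n + 1) =
        (∑ k ∈ Finset.Icc 1 n, (((n - k : ℕ) : ℂ) + 1) * c k * c (n - k + 1)) - (B : ℂ) * c n := by
      linear_combination hC
    rw [← Complex.ofReal_inj]
    push_cast
    rw [hc] at hCC
    push_cast at hCC
    convert hCC using 2
  -- the three identities
  have h2 : 2 * a 2 = 1 - B := by
    have := hrec 1 le_rfl
    simp [ha1] at this
    linarith
  have h3 : 3 * a 3 = (1 - B + 2) * a 2 := by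
    have := hrec 2 (by omega)
    rw [show Finset.Icc 1 2 = {1, 2} from rfl] at this
    simp [ha1] at this
    norm_num at this
    linarith
  have h4 : ∀ n : ℕ, 2 < n →
      ((n : ℝ) + 1) * a (n + 1) = (1 - B + (n : ℝ)) * a n +
        ∑ k ∈ Finset.Icc 1 (n - 2), ((k : ℝ) + 1) * a (k + 1) * a (n - k) := by
    intro n hn
    have hr := hrec n (by omega)
    have hsplit : Finset.Icc 1 n = insert 1 (insert n (Finset.Icc 2 (n - 1))) := by
      ext m
      simp only [Finset.mem_Icc, Finset.mem_insert]
      omega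
    rw [hsplit, Finset.sum_insert, Finset.sum_insert] at hr
    rotate_left
    · simp only [Finset.mem_Icc]; omega
    · simp only [Finset.mem_insert, Finset.mem_Icc]; omega
    have e1 : (((n - 1 : ℕ) : ℝ) + 1) * a 1 * a (n - 1 + 1) = (n : ℝ) * a n := by
      rw [show n - 1 + 1 = n by omega, ha1]
      rw [Nat.cast_sub (by omega)]
      ring
    have e2 : (((n - n : ℕ) : ℝ) + 1) * a n * a (n - n + 1) = a n := by
      rw [Nat.sub_self, ha1]
      simp
    have e3 : ∑ k ∈ Finset.Icc 2 (n - 1), (((n - k : ℕ) : ℝ) + 1) * a k * a (n - k + 1)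
        = ∑ k ∈ Finset.Icc 1 (n - 2), ((k : ℝ) + 1) * a (k + 1) * a (n - k) := by
      refine Finset.sum_nbij' (i := fun k => n - k) (j := fun k => n - k) ?_ ?_ ?_ ?_ ?_
      · intro k hk
        simp only [Finset.mem_Icc] at hk ⊢
        omega
      · intro k hk
        simp only [Finset.mem_Icc] at hk ⊢
        omega
      · intro k hk
        simp only [Finset.mem_Icc] at hk
        show n - (n - k) = k
        omega
      · intro k hk
        simp only [Finset.mem_Icc] at hk
        show n - (n - k) = k
        omega
      · intro k hk
        simp only [Finset.mem_Icc] at hk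
        show _ = ((((n - k : ℕ) : ℝ)) + 1) * a ((n - k) + 1) * a (n - (n - k))
        rw [show n - (n - k) = k by omega]
        ring
    rw [e1, e2, e3] at hr
    linarith
  refine ⟨?_, h2, h3, h4⟩
  -- positivity
  have ha2 : 0 < a 2 := by linarith
  intro n
  induction n using Nat.strong_induction_on with
  | _ n ih =>
    intro hn
    rcases eq_or_ne n 2 with rfl | hn2
    · exact ha2
    rcases eq_or_ne n 3 with rfl | hn3
    · nlinarith
    obtain ⟨m, rfl⟩ : ∃ m, n = m + 1 := ⟨n - 1, by omega⟩
    have hm2 : 2 < m := by omega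
    have hrecm := h4 m hm2
    have ham : 0 < a m := ih m (by omega) (by omega)
    have hsum : 0 ≤ ∑ k ∈ Finset.Icc 1 (m - 2), ((k : ℝ) + 1) * a (k + 1) * a (m - k) := by
      refine Finset.sum_nonneg fun k hk => ?_
      have hk' := Finset.mem_Icc.mp hk
      have p1 : 0 < a (k + 1) := ih (k + 1) (by omega) (by omega)
      have p2 : 0 < a (m - k) := ih (m - k) (by omega) (by omega)
      positivity
    have hBm : 0 < 1 - B + (m : ℝ) := by
      have : (0 : ℝ) ≤ (m : ℝ) := Nat.cast_nonneg m
      linarith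
    have hpos : 0 < ((m : ℝ) + 1) * a (m + 1) := by
      rw [hrecm]
      nlinarith
    have hm1 : (0 : ℝ) < (m : ℝ) + 1 := by positivity
    push_cast
    nlinarith
end
end

section
/- Let A > 0 and let f(z) = z e^{Az}. Then the analytic inverse F = f^{-1} of f in a neighbourhood of the origin has Taylor expansion F(w) = w + \sum_{n=2}^{\infty} \gamma_n w^n with \gamma_n = (-1)^{n-1} n^{n-2} A^{n-1}/(n-1)! for all n \ge 2; in particular |\gamma_n| = (1/n) \prod_{m=0}^{n-2} (nA/(m+1)), so the bound of the inverse coefficient estimate for S^*[A,0] is attained. -/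
open Complex Metric Finset Filter Topology

noncomputable section


private lemma pascal_reduce (m : ℕ) (g : ℕ → ℂ) :
    ∑ j ∈ range (m+2), (-1:ℂ)^j * ((m+1).choose j) * g j
      = ∑ j ∈ range (m+1), (-1:ℂ)^j * (m.choose j) * (g j - g (j+1)) := by
  have h1 : ∑ j ∈ range (m+2), (-1:ℂ)^j * ((m+1).choose j) * g j
      = (∑ j ∈ range (m+1), (-1:ℂ)^(j+1) * ((m+1).choose (j+1)) * g (j+1)) + g 0 := by
    rw [Finset.sum_range_succ']; simp
  have h2 : ∑ j ∈ range (m+1), (-1:ℂ)^j * (m.choose j) * g j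
      = (∑ j ∈ range m, (-1:ℂ)^(j+1) * (m.choose (j+1)) * g (j+1)) + g 0 := by
    rw [Finset.sum_range_succ']; simp
  have h3 : ∀ j, ((m+1).choose (j+1) : ℂ) = (m.choose j : ℂ) + (m.choose (j+1) : ℂ) := by
    intro j; rw [Nat.choose_succ_succ]; push_cast; ring
  rw [h1]
  simp only [h3, mul_sub]
  rw [Finset.sum_sub_distrib]
  have h4 : ∑ j ∈ range (m+1), (-1:ℂ)^(j+1) * ((m.choose j : ℂ) + (m.choose (j+1))) * g (j+1)
      = ∑ j ∈ range (m+1), (-1:ℂ)^(j+1) * (m.choose j) * g (j+1)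
        + ∑ j ∈ range (m+1), (-1:ℂ)^(j+1) * (m.choose (j+1)) * g (j+1) := by
    rw [← Finset.sum_add_distrib]; congr 1; ext j; ring
  rw [h4]
  have h5 : ∑ j ∈ range (m+1), (-1:ℂ)^(j+1) * (m.choose (j+1)) * g (j+1)
      = ∑ j ∈ range m, (-1:ℂ)^(j+1) * (m.choose (j+1)) * g (j+1) := by
    rw [Finset.sum_range_succ, Nat.choose_succ_self]; simp
  rw [h5, h2]
  have h6 : ∀ j, (-1:ℂ)^(j+1) * (m.choose j) * g (j+1) = -((-1:ℂ)^j * (m.choose j) * g (j+1)) := by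
    intro j; ring
  simp only [h6, Finset.sum_neg_distrib]
  ring

private lemma findiff (m : ℕ) : ∀ (d : ℕ), d < m → ∀ (x : ℂ),
    ∑ j ∈ range (m+1), (-1:ℂ)^j * (m.choose j) * (x + j)^d = 0 := by
  induction m with
  | zero => intro d hd; omega
  | succ m ih =>
    intro d hd x
    show ∑ j ∈ range (m+2), (-1:ℂ)^j * ((m+1).choose j) * (x + j)^d = 0
    rw [pascal_reduce m (fun j => (x + j)^d)]
    rcases Nat.eq_zero_or_pos d with h0 | hpos
    · simp [h0]
    · have hexp : ∀ j : ℕ, ((x + (j:ℕ))^d : ℂ) - (x + ((j+1:ℕ):ℕ))^d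
          = -∑ i ∈ range d, (d.choose i : ℂ) * (x + j)^i := by
        intro j
        have e1 : (x + ((j:ℕ)+1:ℕ) : ℂ) = (x + j) + 1 := by push_cast; ring
        have e2 : ((x + (j:ℂ)) + 1)^d
            = ∑ i ∈ range (d+1), (x + (j:ℂ))^i * 1^(d-i) * (d.choose i : ℂ) := add_pow _ _ _
        rw [e1, e2, Finset.sum_range_succ]
        simp only [one_pow, mul_one, Nat.choose_self, Nat.cast_one]
        have e3 : ∑ i ∈ range d, (x + (j:ℂ))^i * (d.choose i : ℂ)
            = ∑ i ∈ range d, (d.choose i : ℂ) * (x + j)^i := by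
          apply Finset.sum_congr rfl; intro i _; ring
        rw [e3]; ring
      simp only [hexp]
      have h7 : ∀ j ∈ range (m+1), (-1:ℂ)^j * (m.choose j)
            * -(∑ i ∈ range d, (d.choose i:ℂ) * (x+j)^i)
          = ∑ i ∈ range d, -((d.choose i:ℂ) * ((-1:ℂ)^j * (m.choose j) * (x+j)^i)) := by
        intro j _
        rw [mul_neg, Finset.mul_sum, ← Finset.sum_neg_distrib]
        apply Finset.sum_congr rfl; intro i _; ring
      rw [Finset.sum_congr rfl h7, Finset.sum_comm]
      apply Finset.sum_eq_zero
      intro i hi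
      have hi' : i < m := lt_of_lt_of_le (Finset.mem_range.mp hi) (Nat.lt_succ_iff.mp hd)
      have := ih i hi' x
      calc ∑ j ∈ range (m+1), -((d.choose i:ℂ) * ((-1:ℂ)^j * (m.choose j) * (x+j)^i))
          = -((d.choose i:ℂ) * ∑ j ∈ range (m+1), (-1:ℂ)^j * (m.choose j) * (x+j)^i) := by
            rw [Finset.mul_sum, ← Finset.sum_neg_distrib]
        _ = 0 := by rw [this]; ring


private lemma tail_tendsto {b : ℕ → ℂ} {h : ℂ → ℂ} {r : ℝ} (hr : 0 < r)
    (hsum : ∀ z : ℂ, ‖z‖ < r → HasSum (fun m => b m * z ^ m) (h z)) (n : ℕ)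
    (hb : ∀ m, m < n → b m = 0) :
    Tendsto (fun z => h z / z ^ n) (𝓝[≠] (0 : ℂ)) (𝓝 (b n)) := by
  set s : ℝ := r / 2 with hs
  have hspos : 0 < s := by positivity
  clear_value s
  have hsne : s ≠ 0 := ne_of_gt hspos
  -- bound on coefficients
  have hsummable : Summable (fun m => b m * (s : ℂ) ^ m) :=
    (hsum (s : ℂ) (by rw [Complex.norm_real, Real.norm_eq_abs, abs_of_pos hspos, hs]; linarith)).summable
  have htend : Tendsto (fun m => ‖b m * (s : ℂ) ^ m‖) atTop (𝓝 0) := by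
    simpa using hsummable.tendsto_atTop_zero.norm
  obtain ⟨M, hM⟩ := htend.bddAbove_range
  have hM' : ∀ m, ‖b m‖ * s ^ m ≤ M := by
    intro m
    have := hM (Set.mem_range_self m)
    simpa [norm_mul, norm_pow, Complex.norm_real, abs_of_pos hspos] using this
  have hM0 : 0 ≤ M := le_trans (by positivity) (hM' 0)
  set K : ℝ := 2 * M / s ^ (n + 1) with hK
  have hK0 : 0 ≤ K := by positivity
  -- main estimate
  have key : ∀ z : ℂ, z ≠ 0 → ‖z‖ ≤ s / 2 → ‖h z / z ^ n - b n‖ ≤ K * ‖z‖ := by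
    intro z hz0 hzs
    have hzr : ‖z‖ < r := by linarith [hspos]
    have hS := hsum z hzr
    have htail : HasSum (fun m => b (m + (n + 1)) * z ^ (m + (n + 1)))
        (h z - ∑ i ∈ Finset.range (n + 1), b i * z ^ i) := by
      have := (hasSum_nat_add_iff (f := fun m => b m * z ^ m) (n + 1)
        (g := h z - ∑ i ∈ Finset.range (n + 1), b i * z ^ i)).mpr
      apply this
      convert hS using 1
      · rfl
      ring
    have hps : ∑ i ∈ Finset.range (n + 1), b i * z ^ i = b n * z ^ n := by
      rw [Finset.sum_eq_single n]
      · intro i hi hne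
        simp only [Finset.mem_range] at hi
        rw [hb i (by omega), zero_mul]
      · intro hni; exact absurd (Finset.self_mem_range_succ n) hni
    rw [hps] at htail
    -- bound the tail
    have hratio : ‖z‖ / s ≤ 1 / 2 := by
      rw [div_le_div_iff₀ (by positivity) (by norm_num)]; linarith
    have hzpos : (0:ℝ) ≤ ‖z‖ := norm_nonneg z
    have hbound : ∀ m : ℕ, ‖b (m + (n + 1)) * z ^ (m + (n + 1))‖
        ≤ (M * (‖z‖ / s) ^ (n + 1)) * (1 / 2) ^ m := by
      intro m
      have h1 : ‖b (m + (n + 1)) * z ^ (m + (n + 1))‖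
          = ‖b (m + (n + 1))‖ * s ^ (m + (n + 1)) * (‖z‖ / s) ^ (m + (n + 1)) := by
        rw [norm_mul, norm_pow, div_pow, mul_assoc]
        congr 1
        rw [mul_div_assoc']
        rw [mul_comm, mul_div_assoc, div_self (pow_ne_zero _ hsne), mul_one]
      rw [h1]
      have h2 : (‖z‖ / s) ^ (m + (n + 1)) = (‖z‖ / s) ^ m * (‖z‖ / s) ^ (n + 1) := by
        rw [← pow_add]
      have h3 : (‖z‖ / s) ^ m ≤ (1/2) ^ m :=
        pow_le_pow_left₀ (by positivity) hratio m
      calc ‖b (m + (n + 1))‖ * s ^ (m + (n + 1)) * (‖z‖ / s) ^ (m + (n + 1))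
          ≤ M * (‖z‖ / s) ^ (m + (n + 1)) := by
            apply mul_le_mul_of_nonneg_right (hM' _) (by positivity)
        _ = M * (‖z‖ / s) ^ (n + 1) * (‖z‖ / s) ^ m := by rw [h2]; ring
        _ ≤ M * (‖z‖ / s) ^ (n + 1) * (1/2) ^ m := by
            apply mul_le_mul_of_nonneg_left h3 (by positivity)
        _ = (M * (‖z‖ / s) ^ (n + 1)) * (1 / 2) ^ m := by ring
    have hgeo : Summable (fun m : ℕ => (M * (‖z‖ / s) ^ (n + 1)) * (1 / 2) ^ m) :=
      (summable_geometric_of_lt_one (by norm_num) (by norm_num)).mul_left _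
    have hnorm : ‖h z - b n * z ^ n‖ ≤ (M * (‖z‖ / s) ^ (n + 1)) * 2 := by
      have h4 : ‖h z - b n * z ^ n‖ ≤ ∑' m, ((M * (‖z‖ / s) ^ (n + 1)) * (1 / 2) ^ m) := by
        apply htail.norm_le_of_bounded hgeo.hasSum hbound
      calc ‖h z - b n * z ^ n‖ ≤ ∑' m, ((M * (‖z‖ / s) ^ (n + 1)) * (1 / 2) ^ m) := h4
        _ = (M * (‖z‖ / s) ^ (n + 1)) * ∑' m : ℕ, ((1:ℝ) / 2) ^ m := by rw [tsum_mul_left]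
        _ = (M * (‖z‖ / s) ^ (n + 1)) * 2 := by
            rw [tsum_geometric_of_lt_one (by norm_num) (by norm_num)]; norm_num
    -- convert to bound on the quotient
    have hzn : z ^ n ≠ 0 := pow_ne_zero n hz0
    have h5 : (h z - b n * z ^ n) / z ^ n = h z / z ^ n - b n := by
      rw [sub_div, mul_div_cancel_right₀ _ hzn]
    rw [← h5, norm_div, norm_pow]
    rw [div_le_iff₀ (pow_pos (norm_pos_iff.mpr hz0) n)]
    calc ‖h z - b n * z ^ n‖ ≤ (M * (‖z‖ / s) ^ (n + 1)) * 2 := hnorm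
      _ = K * ‖z‖ * ‖z‖ ^ n := by
          rw [hK, div_pow]
          field_simp
          ring
  -- conclude
  have hev : ∀ᶠ z in 𝓝[≠] (0:ℂ), ‖h z / z ^ n - b n‖ ≤ K * ‖z‖ := by
    have h1 : ∀ᶠ z in 𝓝 (0:ℂ), ‖z‖ ≤ s / 2 := by
      filter_upwards [Metric.ball_mem_nhds (0:ℂ) (show (0:ℝ) < s/2 by positivity)] with z hz
      simp only [Metric.mem_ball, dist_zero_right] at hz
      linarith
    filter_upwards [h1.filter_mono nhdsWithin_le_nhds, self_mem_nhdsWithin] with z h1 h2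
    exact key z h2 h1
  have h0 : Tendsto (fun z : ℂ => K * ‖z‖) (𝓝[≠] (0:ℂ)) (𝓝 0) := by
    have : Tendsto (fun z : ℂ => K * ‖z‖) (𝓝 (0:ℂ)) (𝓝 (K * ‖(0:ℂ)‖)) := by
      exact (continuous_const.mul continuous_norm).tendsto 0
    simpa using this.mono_left nhdsWithin_le_nhds
  have := squeeze_zero_norm' hev h0
  rwa [tendsto_sub_nhds_zero_iff] at this


private lemma hasSum_exppow (A : ℝ) (k : ℕ) (z : ℂ) :
    HasSum (fun m : ℕ => (if k ≤ m then ((k : ℂ) * A) ^ (m - k) / (((m - k).factorial : ℕ) : ℂ) else 0) * z ^ m)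
      ((z * Complex.exp ((A : ℂ) * z)) ^ k) := by
  have hexp : HasSum (fun j : ℕ => ((k : ℂ) * A * z) ^ j / (j.factorial : ℂ))
      (Complex.exp ((k : ℂ) * A * z)) := by
    rw [Complex.exp_eq_exp_ℂ]
    exact NormedSpace.expSeries_div_hasSum_exp _
  have hpow : (z * Complex.exp ((A : ℂ) * z)) ^ k = z ^ k * Complex.exp ((k : ℂ) * A * z) := by
    rw [mul_pow, ← Complex.exp_nat_mul]
    ring_nf
  rw [hpow]
  have h1 : HasSum (fun j : ℕ => z ^ k * (((k : ℂ) * A * z) ^ j / (j.factorial : ℂ)))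
      (z ^ k * Complex.exp ((k : ℂ) * A * z)) := hexp.mul_left _
  have hinj : Function.Injective (fun j : ℕ => j + k) := fun a b h => by dsimp at h; omega
  apply (Function.Injective.hasSum_iff hinj ?_).mp ?_
  · intro m hm
    have : ¬ k ≤ m := by
      intro hle
      exact hm ⟨m - k, Nat.sub_add_cancel hle⟩
    simp [this]
  · convert h1 using 1
    funext j
    simp only [Function.comp_apply]
    rw [if_pos (by omega : k ≤ j + k)]
    have h2 : j + k - k = j := by omega
    rw [h2, mul_pow]
    rw [mul_comm ((k:ℂ)*(A:ℂ)) z, mul_pow, pow_add]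
    ring


private noncomputable def gamF (A : ℝ) (k : ℕ) : ℂ :=
  if k = 0 then 0
  else (-1) ^ (k - 1) * (k : ℂ) ^ (k - 2) * (A : ℂ) ^ (k - 1) / (((k - 1).factorial : ℕ) : ℂ)


private lemma gamF_one (A : ℝ) : gamF A 1 = 1 := by
  simp [gamF]

private lemma fact_ne (k : ℕ) : ((k.factorial : ℕ) : ℂ) ≠ 0 :=
  Nat.cast_ne_zero.mpr (Nat.factorial_ne_zero k)

private lemma gamF_rec (A : ℝ) {n : ℕ} (hn : 2 ≤ n) :
    ∑ k ∈ Icc 1 n, gamF A k * ((k : ℂ) * A) ^ (n - k) / (((n - k).factorial : ℕ) : ℂ) = 0 := by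
  obtain ⟨m, rfl⟩ : ∃ m, n = m + 1 := ⟨n - 1, by omega⟩
  have hm : 1 ≤ m := by omega
  set d : ℕ := m - 1 with hd
  have hre : ∑ k ∈ Icc 1 (m+1), gamF A k * ((k : ℂ) * A) ^ (m+1-k) / (((m+1-k).factorial : ℕ) : ℂ)
      = ∑ j ∈ range (m+1), gamF A (1+j) * (((1+j : ℕ) : ℂ) * A) ^ (m+1-(1+j)) / (((m+1-(1+j)).factorial : ℕ) : ℂ) := by
    rw [← Finset.Ico_add_one_right_eq_Icc, Finset.sum_Ico_eq_sum_range]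
    norm_num
  rw [hre]
  have hterm : ∀ j ∈ range (m+1),
      gamF A (1+j) * (((1+j : ℕ) : ℂ) * A) ^ (m+1-(1+j)) / (((m+1-(1+j)).factorial : ℕ) : ℂ)
      = ((A:ℂ)^m / ((m.factorial : ℕ):ℂ)) * ((-1:ℂ)^j * (m.choose j) * ((1:ℂ) + j)^d) := by
    intro j hj
    have hjm : j ≤ m := by simpa [Nat.lt_succ_iff] using hj
    set B : ℂ := ((1+j : ℕ) : ℂ) with hB
    have hB' : B = (1:ℂ) + j := by rw [hB]; push_cast; ring
    have e1 : (1+j) - 1 = j := by omega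
    have e2 : (1+j) - 2 = j - 1 := by omega
    have e3 : m+1-(1+j) = m - j := by omega
    have hBe : B ^ (j-1) * B ^ (m-j) = B ^ d := by
      rcases Nat.eq_zero_or_pos j with h0 | hpos
      · subst h0; simp [hB]
      · rw [← pow_add]; congr 1; omega
    have hgam : gamF A (1+j) = (-1:ℂ)^j * B^(j-1) * (A:ℂ)^j / ((j.factorial : ℕ):ℂ) := by
      rw [gamF, if_neg (by omega), e1, e2]
    rw [hgam, e3, mul_pow]
    have hc : ((m.choose j : ℕ) : ℂ) * ((j.factorial : ℕ):ℂ) * (((m-j).factorial : ℕ):ℂ)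
        = ((m.factorial : ℕ):ℂ) := by
      rw [← Nat.cast_mul, ← Nat.cast_mul, Nat.choose_mul_factorial_mul_factorial hjm]
    have num : (-1:ℂ)^j * B^(j-1) * (A:ℂ)^j * (B^(m-j) * (A:ℂ)^(m-j))
        = (-1:ℂ)^j * B^d * (A:ℂ)^m := by
      calc (-1:ℂ)^j * B^(j-1) * (A:ℂ)^j * (B^(m-j) * (A:ℂ)^(m-j))
          = (-1:ℂ)^j * (B^(j-1) * B^(m-j)) * ((A:ℂ)^j * (A:ℂ)^(m-j)) := by ring
        _ = (-1:ℂ)^j * B^d * (A:ℂ)^m := by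
            rw [hBe, ← pow_add]
            congr 2
            omega
    rw [div_mul_eq_mul_div, div_div, num, hB']
    rw [show (A:ℂ)^m / ((m.factorial : ℕ):ℂ) * ((-1:ℂ)^j * (m.choose j) * ((1:ℂ) + j)^d)
        = ((-1:ℂ)^j * (m.choose j) * ((1:ℂ) + j)^d * (A:ℂ)^m) / ((m.factorial : ℕ):ℂ) from by ring]
    rw [div_eq_div_iff (mul_ne_zero (fact_ne j) (fact_ne (m-j))) (fact_ne m)]
    rw [← hc]
    ring
  rw [Finset.sum_congr rfl hterm, ← Finset.mul_sum, findiff m d (by omega) 1, mul_zero]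


private lemma gamma_rec (A : ℝ)
    (f : ℂ → ℂ) (hf : ∀ z : ℂ, f z = z * Complex.exp ((A : ℂ) * z))
    (F : ℂ → ℂ) (hFf : ∀ᶠ z in nhds (0 : ℂ), F (f z) = z)
    (γ : ℕ → ℂ) (hγ0 : γ 0 = 0) (hγ1 : γ 1 = 1)
    (r : ℝ) (hr : 0 < r)
    (hFs : ∀ w : ℂ, ‖w‖ < r → HasSum (fun m : ℕ => γ m * w ^ m) (F w)) :
    ∀ n : ℕ, 2 ≤ n →
      ∑ k ∈ Icc 1 n, γ k * ((k : ℂ) * A) ^ (n - k) / (((n - k).factorial : ℕ) : ℂ) = 0 := by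
  have hfeq : f = fun z => z * Complex.exp ((A : ℂ) * z) := funext hf
  subst hfeq
  intro n
  induction n using Nat.strong_induction_on with
  | _ n ih =>
  intro hn
  set S : Finset ℕ := Icc 1 (n - 1) with hS
  set ek : ℕ → ℕ → ℂ :=
    fun k m => if k ≤ m then ((k : ℂ) * A) ^ (m - k) / (((m - k).factorial : ℕ) : ℂ) else 0 with hek
  set b : ℕ → ℂ :=
    fun m => (if m = 1 then (1 : ℂ) else 0) - ∑ k ∈ S, γ k * ek k m with hb
  set g : ℂ → ℂ :=
    fun z => z - ∑ k ∈ S, γ k * (z * Complex.exp ((A : ℂ) * z)) ^ k with hg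
  -- power series of g
  have hgsum : ∀ z : ℂ, HasSum (fun m => b m * z ^ m) (g z) := by
    intro z
    have h1 : HasSum (fun m : ℕ => (if m = 1 then (1 : ℂ) else 0) * z ^ m) z := by
      have h := hasSum_ite_eq (1 : ℕ) z
      convert h using 1
      funext m
      by_cases hm : m = 1 <;> simp [hm]
    have h2 : HasSum (fun m : ℕ => ∑ k ∈ S, γ k * ek k m * z ^ m)
        (∑ k ∈ S, γ k * (z * Complex.exp ((A : ℂ) * z)) ^ k) := by
      apply hasSum_sum
      intro k _
      have h3 := (hasSum_exppow A k z).mul_left (γ k)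
      convert h3 using 1
      · rfl
      funext m
      rw [hek]
      ring
    have h4 := h1.sub h2
    convert h4 using 1
    · rfl
    funext m
    rw [hb]
    dsimp only
    rw [sub_mul, Finset.sum_mul]
  -- vanishing of low coefficients of g
  have hb0 : ∀ m, m < n → b m = 0 := by
    intro m hm
    rw [hb]
    dsimp only
    rcases Nat.lt_or_ge m 1 with h0 | h1
    · interval_cases m
      rw [if_neg (by omega)]
      rw [Finset.sum_eq_zero, sub_zero]
      intro k hk
      rw [hS, Finset.mem_Icc] at hk
      rw [hek]
      dsimp only
      rw [if_neg (by omega), mul_zero]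
    rcases Nat.lt_or_ge m 2 with h2 | h2
    · -- m = 1
      have hm1 : m = 1 := by omega
      subst hm1
      rw [if_pos rfl]
      rw [Finset.sum_eq_single_of_mem 1 (by rw [hS, Finset.mem_Icc]; omega)]
      · rw [hek, hγ1]
        norm_num
      · intro k hk hne
        rw [hS, Finset.mem_Icc] at hk
        rw [hek]
        dsimp only
        rw [if_neg (by omega), mul_zero]
    · -- 2 ≤ m < n
      rw [if_neg (by omega)]
      have hss : Icc 1 m ⊆ S := by
        intro k hk
        rw [Finset.mem_Icc] at hk
        rw [hS, Finset.mem_Icc]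
        omega
      have hzz : ∀ k ∈ S, k ∉ Icc 1 m → γ k * ek k m = 0 := by
        intro k hk hnk
        rw [hS, Finset.mem_Icc] at hk
        rw [Finset.mem_Icc] at hnk
        rw [hek]
        dsimp only
        rw [if_neg (by omega), mul_zero]
      have e := Finset.sum_subset hss hzz
      have hsub : ∑ k ∈ S, γ k * ek k m
          = ∑ k ∈ Icc 1 m, γ k * ((k : ℂ) * A) ^ (m - k) / (((m - k).factorial : ℕ) : ℂ) := by
        rw [← e]
        apply Finset.sum_congr rfl
        intro k hk
        rw [Finset.mem_Icc] at hk
        rw [hek]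
        dsimp only
        rw [if_pos (by omega)]
        ring
      rw [hsub, ih m hm h2, sub_zero]
  -- value of b n
  have hbn : b n = -∑ k ∈ S, γ k * ((k : ℂ) * A) ^ (n - k) / (((n - k).factorial : ℕ) : ℂ) := by
    rw [hb]
    dsimp only
    rw [if_neg (by omega), zero_sub]
    congr 1
    apply Finset.sum_congr rfl
    intro k hk
    rw [hS, Finset.mem_Icc] at hk
    rw [hek]
    dsimp only
    rw [if_pos (by omega)]
    ring
  -- limit of g z / z^n
  have L1 : Tendsto (fun z => g z / z ^ n) (𝓝[≠] (0 : ℂ)) (𝓝 (b n)) :=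
    tail_tendsto one_pos (fun z _ => hgsum z) n hb0
  -- the tail function T
  set T : ℂ → ℂ := fun w => F w - ∑ k ∈ S, γ k * w ^ k with hT
  set bT : ℕ → ℂ := fun m => γ m - (if m ∈ S then γ m else 0) with hbT
  have hTsum : ∀ w : ℂ, ‖w‖ < r → HasSum (fun m => bT m * w ^ m) (T w) := by
    intro w hw
    have h5 : HasSum (fun m : ℕ => (if m ∈ S then γ m else 0) * w ^ m)
        (∑ k ∈ S, γ k * w ^ k) := by
      have h6 : ∀ m ∉ S, (if m ∈ S then γ m else 0) * w ^ m = 0 := by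
        intro m hm; rw [if_neg hm, zero_mul]
      have h7 := hasSum_sum_of_ne_finset_zero (L := SummationFilter.unconditional ℕ) h6
      convert h7 using 1
      apply Finset.sum_congr rfl
      intro k hk
      rw [if_pos hk]
    have h8 := (hFs w hw).sub h5
    convert h8 using 1
    · rfl
    funext m
    rw [hbT]
    dsimp only
    rw [sub_mul]
  have hbT0 : ∀ m, m < n → bT m = 0 := by
    intro m hm
    rw [hbT]
    dsimp only
    rcases Nat.eq_zero_or_pos m with h0 | h1
    · subst h0
      rw [if_neg (by rw [hS, Finset.mem_Icc]; omega), hγ0, sub_zero]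
    · rw [if_pos (by rw [hS, Finset.mem_Icc]; omega), sub_self]
  have hbTn : bT n = γ n := by
    rw [hbT]
    dsimp only
    rw [if_neg (by rw [hS, Finset.mem_Icc]; omega), sub_zero]
  have L2 : Tendsto (fun w => T w / w ^ n) (𝓝[≠] (0 : ℂ)) (𝓝 (γ n)) := by
    have := tail_tendsto hr hTsum n hbT0
    rwa [hbTn] at this
  -- f maps punctured nbhd to punctured nbhd
  have hfne : ∀ z : ℂ, z ≠ 0 → z * Complex.exp ((A : ℂ) * z) ≠ 0 :=
    fun z hz => mul_ne_zero hz (Complex.exp_ne_zero _)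
  have L3 : Tendsto (fun z : ℂ => z * Complex.exp ((A : ℂ) * z)) (𝓝[≠] (0 : ℂ)) (𝓝[≠] (0 : ℂ)) := by
    apply tendsto_nhdsWithin_of_tendsto_nhds_of_eventually_within
    · have hc : Continuous (fun z : ℂ => z * Complex.exp ((A : ℂ) * z)) :=
        continuous_id.mul (Complex.continuous_exp.comp (continuous_const.mul continuous_id))
      have := hc.tendsto 0
      simp only [zero_mul, mul_zero] at this
      exact (this.mono_left nhdsWithin_le_nhds)
    · filter_upwards [eventually_mem_nhdsWithin] with z hz
      exact hfne z hz
  have L4 : Tendsto (fun z : ℂ =>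
      T (z * Complex.exp ((A : ℂ) * z)) / (z * Complex.exp ((A : ℂ) * z)) ^ n)
      (𝓝[≠] (0 : ℂ)) (𝓝 (γ n)) := L2.comp L3
  have L5 : Tendsto (fun z : ℂ => (Complex.exp ((A : ℂ) * z)) ^ n) (𝓝[≠] (0 : ℂ)) (𝓝 1) := by
    have hc : Continuous (fun z : ℂ => (Complex.exp ((A : ℂ) * z)) ^ n) :=
      (Complex.continuous_exp.comp (continuous_const.mul continuous_id)).pow n
    have := hc.tendsto 0
    simp only [mul_zero, Complex.exp_zero, one_pow] at this
    exact this.mono_left nhdsWithin_le_nhds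
  have L6 : (fun z : ℂ =>
      T (z * Complex.exp ((A : ℂ) * z)) / (z * Complex.exp ((A : ℂ) * z)) ^ n
        * (Complex.exp ((A : ℂ) * z)) ^ n)
      =ᶠ[𝓝[≠] (0 : ℂ)] (fun z => g z / z ^ n) := by
    filter_upwards [hFf.filter_mono nhdsWithin_le_nhds, eventually_mem_nhdsWithin] with z hFz hz
    have hfz : z * Complex.exp ((A : ℂ) * z) ≠ 0 := hfne z hz
    have hgT : g z = T (z * Complex.exp ((A : ℂ) * z)) := by
      rw [hg, hT]
      dsimp only
      rw [hFz]
    rw [hgT]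
    rw [mul_pow]
    field_simp
  have L7 : Tendsto (fun z => g z / z ^ n) (𝓝[≠] (0 : ℂ)) (𝓝 (γ n)) := by
    have := L4.mul L5
    rw [mul_one] at this
    exact this.congr' L6
  have hkey : b n = γ n := tendsto_nhds_unique L1 L7
  -- conclude
  obtain ⟨p, rfl⟩ : ∃ p, n = p + 1 := ⟨n - 1, by omega⟩
  rw [Finset.sum_Icc_succ_top (by omega)]
  have hSp : S = Icc 1 p := by rw [hS]; norm_num
  rw [← hSp]
  have : γ (p+1) * (((p+1 : ℕ) : ℂ) * A) ^ (p+1-(p+1)) / (((p+1-(p+1)).factorial : ℕ) : ℂ) = γ (p+1) := by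
    norm_num
  rw [this]
  have hbn' : b (p+1) = -∑ k ∈ S, γ k * ((k : ℂ) * A) ^ (p+1-k) / (((p+1-k).factorial : ℕ) : ℂ) := hbn
  rw [hkey] at hbn'
  rw [hbn']
  ring


/-- For `A > 0` and `f(z) = z e^{Az}`, the inverse `F = f⁻¹` near the origin has
Taylor coefficients `γ_n = (-1)^{n-1} n^{n-2} A^{n-1}/(n-1)!` for `n ≥ 2`; in particular
`|γ_n| = (1/n) ∏_{m=0}^{n-2} (nA/(m+1))`, so the inverse coefficient bound for
`S*[A,0]` is attained. -/
theorem inverse_coeff_exp (A : ℝ) (hA : 0 < A)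
    (f : ℂ → ℂ) (hf : ∀ z : ℂ, f z = z * Complex.exp ((A : ℂ) * z))
    (F : ℂ → ℂ) (hFf : ∀ᶠ z in nhds (0 : ℂ), F (f z) = z)
    (γ : ℕ → ℂ) (hγ0 : γ 0 = 0) (hγ1 : γ 1 = 1)
    (hF : ∃ r > 0, ∀ w : ℂ, ‖w‖ < r → HasSum (fun n : ℕ => γ n * w ^ n) (F w))
    (n : ℕ) (hn : 2 ≤ n) :
    γ n = (-1) ^ (n - 1) * (n : ℂ) ^ (n - 2) * (A : ℂ) ^ (n - 1) / ((Nat.factorial (n - 1) : ℕ) : ℂ) ∧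
    ‖γ n‖ = (1 / (n : ℝ)) * ∏ m ∈ Finset.range (n - 1), ((n : ℝ) * A / ((m : ℝ) + 1)) := by
  obtain ⟨r, hr, hFs⟩ := hF
  have hrec := gamma_rec A f hf F hFf γ hγ0 hγ1 r hr hFs
  have hmain : ∀ n : ℕ, 2 ≤ n → γ n = gamF A n := by
    intro n
    induction n using Nat.strong_induction_on with
    | _ n ih =>
    intro hn
    have h1 := hrec n hn
    have h2 := gamF_rec A hn
    obtain ⟨p, rfl⟩ : ∃ p, n = p + 1 := ⟨n - 1, by omega⟩
    rw [Finset.sum_Icc_succ_top (by omega)] at h1 h2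
    have e1 : γ (p+1) * (((p+1 : ℕ) : ℂ) * A) ^ (p+1-(p+1)) / (((p+1-(p+1)).factorial : ℕ) : ℂ)
        = γ (p+1) := by norm_num
    have e2 : gamF A (p+1) * (((p+1 : ℕ) : ℂ) * A) ^ (p+1-(p+1)) / (((p+1-(p+1)).factorial : ℕ) : ℂ)
        = gamF A (p+1) := by norm_num
    rw [e1] at h1
    rw [e2] at h2
    have hsame : ∑ k ∈ Finset.Icc 1 p, γ k * ((k : ℂ) * A) ^ (p+1-k) / (((p+1-k).factorial : ℕ) : ℂ)
        = ∑ k ∈ Finset.Icc 1 p, gamF A k * ((k : ℂ) * A) ^ (p+1-k) / (((p+1-k).factorial : ℕ) : ℂ) := by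
      apply Finset.sum_congr rfl
      intro k hk
      rw [Finset.mem_Icc] at hk
      rcases Nat.lt_or_ge k 2 with hk2 | hk2
      · have : k = 1 := by omega
        subst this
        rw [hγ1, gamF_one]
      · rw [ih k (by omega) hk2]
    linear_combination h1 - h2 - hsame
  have hform := hmain n hn
  have hgam : gamF A n
      = (-1) ^ (n - 1) * (n : ℂ) ^ (n - 2) * (A : ℂ) ^ (n - 1) / ((Nat.factorial (n - 1) : ℕ) : ℂ) := by
    rw [gamF, if_neg (by omega)]
  constructor
  · rw [hform, hgam]
  · rw [hform, hgam]
    have hnorm : ‖(-1 : ℂ) ^ (n - 1) * (n : ℂ) ^ (n - 2) * (A : ℂ) ^ (n - 1)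
          / ((Nat.factorial (n - 1) : ℕ) : ℂ)‖
        = (n : ℝ) ^ (n - 2) * A ^ (n - 1) / ((Nat.factorial (n - 1) : ℕ) : ℝ) := by
      rw [norm_div, norm_mul, norm_mul, norm_pow, norm_pow, norm_pow, norm_neg, norm_one,
        one_pow, one_mul, Complex.norm_natCast, Complex.norm_real, Real.norm_eq_abs,
        abs_of_pos hA, Complex.norm_natCast]
    rw [hnorm]
    have hprod : ∏ m ∈ Finset.range (n - 1), ((n : ℝ) * A / ((m : ℝ) + 1))
        = ((n : ℝ) * A) ^ (n - 1) / ((Nat.factorial (n - 1) : ℕ) : ℝ) := by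
      rw [Finset.prod_div_distrib, Finset.prod_const, Finset.card_range]
      congr 1
      rw [show (((Nat.factorial (n - 1) : ℕ)) : ℝ)
          = ((∏ m ∈ Finset.range (n - 1), (m + 1) : ℕ) : ℝ) by
        rw [Finset.prod_range_add_one_eq_factorial]]
      push_cast
      rfl
    rw [hprod, mul_pow]
    have hn0 : (n : ℝ) ≠ 0 := by positivity
    have hf0 : ((Nat.factorial (n - 1) : ℕ) : ℝ) ≠ 0 :=
      Nat.cast_ne_zero.mpr (Nat.factorial_ne_zero _)
    have hpow : (n : ℝ) ^ (n - 1) = (n : ℝ) * (n : ℝ) ^ (n - 2) := by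
      rw [show n - 1 = (n - 2) + 1 by omega, pow_succ']
    rw [hpow]
    field_simp
end
end
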